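/- arXiv:2601.23054 — 2 statements merged into one kernel-verified Lean document; each statement's English description precedes it below -/
import Mathlib

section
/- For every x ∈ [0,1/q), the image ω_x(K) equals the subgroup of S_q generated by { σ^p τ σ^{−p} : 0 ≤ p ≤ q−1, τ ∈ 𝔖(Q) }, and the image ω_x([H,H]) equals the commutator subgroup [W,W] of W. In particular, the images ω_x(K) and ω_x([H,H]) do not depend on x. -/
open Equiv

noncomputable section

/-- The circle `ℝ/ℤ`. -/
abbrev Circ : Type := AddCircle (1 : ℝ)

/-- Rotation by `a` : the bijection `x ↦ x + a` of the circle. -/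
def Rot (a : Circ) : Equiv.Perm Circ := Equiv.addRight a

/-- The subgroup `{ p/q mod 1 : p ∈ ℤ }` of the circle. -/
def RatPts (q : ℕ) : AddSubgroup Circ :=
  AddSubgroup.zmultiples (((q : ℝ)⁻¹ : ℝ) : Circ)

/-- The group of bijections of the circle all of whose displacements lie in `RatPts q`. -/
def Delta (q : ℕ) : Subgroup (Equiv.Perm Circ) where
  carrier := {f | ∀ x : Circ, f x - x ∈ RatPts q}
  one_mem' := by intro x; simpa using zero_mem (RatPts q)
  mul_mem' := by
    intro f g hf hg x
    have h1 : f (g x) - g x ∈ RatPts q := hf (g x)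
    have h2 : g x - x ∈ RatPts q := hg x
    have h3 := add_mem h1 h2
    simpa [Equiv.Perm.mul_apply, sub_add_sub_cancel] using h3
  inv_mem' := by
    intro f hf x
    have h1 : f (f⁻¹ x) - f⁻¹ x ∈ RatPts q := hf (f⁻¹ x)
    rw [show f (f⁻¹ x) = x by simp] at h1
    simpa using neg_mem h1

/-- The subgroup `A` of the circle generated by the classes of `α₁, …, α_s`. -/
def Agrp (s : ℕ) (α : Fin s → ℝ) : AddSubgroup Circ :=
  AddSubgroup.closure (Set.range fun i => ((α i : ℝ) : Circ))

/-- The group `H` generated by the rotations `R_{αᵢ}` and the maps `E_{τⱼ}`. -/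
def Hgrp (s m q : ℕ) (α : Fin s → ℝ) (τs : Fin m → Equiv.Perm (Fin q))
    (E : Equiv.Perm (Fin q) → Equiv.Perm Circ) : Subgroup (Equiv.Perm Circ) :=
  Subgroup.closure ((Set.range fun i => Rot ((α i : ℝ) : Circ)) ∪ (Set.range fun j => E (τs j)))

/-- The group `Q` generated by the maps `E_{τⱼ}`. -/
def Qgrp (m q : ℕ) (τs : Fin m → Equiv.Perm (Fin q))
    (E : Equiv.Perm (Fin q) → Equiv.Perm Circ) : Subgroup (Equiv.Perm Circ) :=
  Subgroup.closure (Set.range fun j => E (τs j))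

/-- The subgroup `𝔖(Q)` of `S_q` generated by `τ₁, …, τ_m`. -/
def SQgrp (m q : ℕ) (τs : Fin m → Equiv.Perm (Fin q)) : Subgroup (Equiv.Perm (Fin q)) :=
  Subgroup.closure (Set.range τs)

/-- The subgroup `W = ⟨σ, τ₁, …, τ_m⟩` of `S_q`, where `σ` is the `q`-cycle. -/
def Wgrp (m q : ℕ) (τs : Fin m → Equiv.Perm (Fin q)) : Subgroup (Equiv.Perm (Fin q)) :=
  Subgroup.closure ({finRotate q} ∪ Set.range τs)

open scoped commutatorElement Fin.NatCast Fin.CommRing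

lemma circ_eq_of_sub_int {r r' : ℝ} (z : ℤ) (h : r - r' = z) : (r : Circ) = (r' : Circ) := by
  have h2 : ((r - r' : ℝ) : Circ) = 0 := by
    rw [AddCircle.coe_eq_zero_iff]; exact ⟨z, by rw [h]; simp⟩
  have h3 : ((r:ℝ):Circ) - ((r':ℝ):Circ) = 0 := h2
  linear_combination (norm := skip) h3
  abel

/-- the basic points of the fiber through `a`. -/
def ptc (q : ℕ) (a : Circ) (p : Fin q) : Circ := a + (((((p:ℕ):ℝ)/(q:ℝ)) : ℝ) : Circ)

lemma ptc_zero (q : ℕ) [NeZero q] (a : Circ) : ptc q a 0 = a := by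
  simp [ptc]

lemma ptc_add (q : ℕ) (a b : Circ) (p : Fin q) : ptc q a p + b = ptc q (a + b) p := by
  simp only [ptc]; abel

lemma ptc_injective (q : ℕ) (hq : 0 < q) (a : Circ) : Function.Injective (ptc q a) := by
  intro p p' h
  haveI : Fact ((0:ℝ) < 1) := ⟨one_pos⟩
  have h2 : ((((p:ℕ):ℝ)/(q:ℝ) : ℝ) : Circ) = ((((p':ℕ):ℝ)/(q:ℝ) : ℝ) : Circ) :=
    add_left_cancel h
  have hq' : (0:ℝ) < q := by exact_mod_cast hq
  have hb : ∀ (r : Fin q), ((r:ℕ):ℝ)/(q:ℝ) ∈ Set.Ico (0:ℝ) (0 + 1) := by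
    intro r
    constructor
    · positivity
    · rw [zero_add, div_lt_one hq']
      exact_mod_cast r.isLt
  have h3 := (AddCircle.coe_eq_coe_iff_of_mem_Ico (hb p) (hb p')).mp h2
  rw [div_eq_div_iff (by positivity) (by positivity)] at h3
  have hval : (p:ℕ) = (p':ℕ) := by
    have := mul_right_cancel₀ (by positivity : (q:ℝ) ≠ 0) h3
    exact_mod_cast this
  exact Fin.ext hval

lemma circ_div_q_eq (q : ℕ) (hq : 0 < q) (m n : ℕ) (t : ℝ) (h : m % q = n % q) :
    (((m:ℝ)/(q:ℝ) + t : ℝ) : Circ) = (((n:ℝ)/(q:ℝ) + t : ℝ) : Circ) := by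
  apply circ_eq_of_sub_int (((m / q : ℕ) : ℤ) - ((n / q : ℕ) : ℤ))
  have hm := Nat.div_add_mod m q
  have hn := Nat.div_add_mod n q
  have hq' : (q:ℝ) ≠ 0 := by positivity
  have hm' : (m:ℝ) = q * ((m/q : ℕ) : ℝ) + ((m % q : ℕ) : ℝ) := by exact_mod_cast hm.symm
  have hn' : (n:ℝ) = q * ((n/q : ℕ) : ℝ) + ((n % q : ℕ) : ℝ) := by exact_mod_cast hn.symm
  rw [hm', hn', h, Int.cast_sub, Int.cast_natCast, Int.cast_natCast]
  field_simp
  ring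

lemma finRotate_pow_apply (q : ℕ) [NeZero q] (n : ℕ) (p : Fin q) :
    (finRotate q ^ n) p = p + (n : Fin q) := by
  induction n generalizing p with
  | zero => simp
  | succ n ih =>
      rw [pow_succ, Equiv.Perm.mul_apply, ih]
      rcases q with _ | q
      · exact absurd rfl (NeZero.ne 0)
      · rw [finRotate_succ_apply]
        push_cast
        ring

lemma finRotate_pow_q (q : ℕ) [NeZero q] : finRotate q ^ q = 1 := by
  ext p
  simp [finRotate_pow_apply]

lemma finRotate_pow_mod (q : ℕ) [NeZero q] (a : ℕ) :
    finRotate q ^ (a % q) = finRotate q ^ a := by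
  conv_rhs => rw [← Nat.div_add_mod a q, pow_add, pow_mul, finRotate_pow_q, one_pow, one_mul]

lemma circ_decomp (q : ℕ) (hq : 0 < q) (z : Circ) :
    ∃ (k : Fin q) (t : ℝ), 0 ≤ t ∧ t < 1/(q:ℝ) ∧ z = ((((k:ℕ):ℝ)/(q:ℝ) + t : ℝ) : Circ) := by
  induction z using QuotientAddGroup.induction_on with
  | H r₀ => ?_
  set r := Int.fract r₀ with hr
  have hr0 : 0 ≤ r := Int.fract_nonneg r₀
  have hr1 : r < 1 := Int.fract_lt_one r₀
  have hq' : (0:ℝ) < q := by exact_mod_cast hq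
  have hfloor0 : 0 ≤ ⌊(q:ℝ) * r⌋ := Int.floor_nonneg.mpr (by positivity)
  have hfloorq : ⌊(q:ℝ) * r⌋ < (q:ℤ) := by
    apply Int.floor_lt.mpr
    push_cast
    nlinarith
  refine ⟨⟨(⌊(q:ℝ) * r⌋).toNat, by omega⟩, r - (⌊(q:ℝ) * r⌋ : ℝ)/(q:ℝ), ?_, ?_, ?_⟩
  · have := Int.floor_le ((q:ℝ) * r)
    rw [sub_nonneg, div_le_iff₀ hq']
    linarith
  · have := Int.lt_floor_add_one ((q:ℝ) * r)
    rw [sub_lt_iff_lt_add, ← add_div, lt_div_iff₀ hq']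
    linarith
  · have hcast : ((⟨(⌊(q:ℝ) * r⌋).toNat, by omega⟩ : Fin q) : ℕ) = ((⌊(q:ℝ) * r⌋).toNat : ℕ) := rfl
    rw [hcast]
    have h2 : ((⌊(q:ℝ) * r⌋).toNat : ℝ) = ((⌊(q:ℝ) * r⌋ : ℤ) : ℝ) := by
      exact_mod_cast congrArg (Int.cast : ℤ → ℝ) (Int.toNat_of_nonneg hfloor0)
    rw [h2]
    apply circ_eq_of_sub_int ⌊r₀⌋
    have hgoal : r₀ - (((⌊(q:ℝ)*r⌋:ℤ):ℝ)/(q:ℝ) + (r - ((⌊(q:ℝ)*r⌋:ℤ):ℝ)/(q:ℝ))) = r₀ - r := by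
      ring
    rw [hgoal, hr]
    exact Int.self_sub_fract r₀
section GT
variable {G : Type*} [Group G] (W : Subgroup G)

lemma comm_sub_le_self : ⁅W, W⁆ ≤ W := by
  rw [Subgroup.commutator_le]
  intro g₁ h₁ g₂ h₂
  rw [commutatorElement_def]
  exact mul_mem (mul_mem (mul_mem h₁ h₂) (inv_mem h₁)) (inv_mem h₂)

lemma conj_mem_comm {w d : G} (hw : w ∈ W) (hd : d ∈ ⁅W, W⁆) : w * d * w⁻¹ ∈ ⁅W, W⁆ := by
  have h1 : ⁅w, d⁆ ∈ ⁅W, W⁆ := Subgroup.commutator_mem_commutator hw (comm_sub_le_self W hd)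
  have : w * d * w⁻¹ = ⁅w, d⁆ * d := by group
  rw [this]
  exact mul_mem h1 hd

lemma gt_one {A₁ A₂ B₁ B₂ : G} (hA2 : A₂ ∈ W) (hB2 : B₂ ∈ W)
    (h1 : A₁ * A₂⁻¹ ∈ ⁅W, W⁆) (h2 : B₁ * B₂⁻¹ ∈ ⁅W, W⁆) :
    A₁ * B₁ * A₂⁻¹ * B₂⁻¹ ∈ ⁅W, W⁆ := by
  have key : A₁ * B₁ * A₂⁻¹ * B₂⁻¹
      = (A₁ * A₂⁻¹) * (A₂ * (B₁ * B₂⁻¹) * A₂⁻¹) * ⁅A₂, B₂⁆ := by group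
  rw [key]
  exact mul_mem (mul_mem h1 (conj_mem_comm W hA2 h2))
    (Subgroup.commutator_mem_commutator hA2 hB2)

lemma gt_two {A₁ A₂ B₁ B₂ : G} (hA2 : A₂ ∈ W)
    (h1 : A₁ * A₂⁻¹ ∈ ⁅W, W⁆) (h2 : B₁ * B₂⁻¹ ∈ ⁅W, W⁆) :
    (A₁ * B₁) * (A₂ * B₂)⁻¹ ∈ ⁅W, W⁆ := by
  have key : (A₁ * B₁) * (A₂ * B₂)⁻¹ = (A₁ * A₂⁻¹) * (A₂ * (B₁ * B₂⁻¹) * A₂⁻¹) := by group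
  rw [key]
  exact mul_mem h1 (conj_mem_comm W hA2 h2)

end GT

/-- the "lift" property : `f` sends the fiber points over `a` to fiber points over
`a + c` with local permutation `ρ a`. -/
def IsL (q : ℕ) (f : Equiv.Perm Circ) (c : Circ) (ρ : Circ → Equiv.Perm (Fin q)) : Prop :=
  ∀ (a : Circ) (p : Fin q), f (ptc q a p) = ptc q (a + c) (ρ a p)

lemma IsL.mul {q : ℕ} {f g : Equiv.Perm Circ} {c c' : Circ} {ρ ρ' : Circ → Equiv.Perm (Fin q)}
    (hf : IsL q f c ρ) (hg : IsL q g c' ρ') :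
    IsL q (f * g) (c' + c) (fun a => ρ (a + c') * ρ' a) := by
  intro a p
  rw [Equiv.Perm.mul_apply, hg a p, hf (a + c') (ρ' a p), Equiv.Perm.mul_apply, ← add_assoc]

lemma IsL.inv {q : ℕ} {f : Equiv.Perm Circ} {c : Circ} {ρ : Circ → Equiv.Perm (Fin q)}
    (hf : IsL q f c ρ) : IsL q f⁻¹ (-c) (fun a => (ρ (a - c))⁻¹) := by
  intro a p
  have h1 : f (ptc q (a - c) ((ρ (a - c))⁻¹ p)) = ptc q a p := by
    rw [hf (a - c) _]
    simp [sub_add_cancel]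
  calc f⁻¹ (ptc q a p) = f⁻¹ (f (ptc q (a - c) ((ρ (a - c))⁻¹ p))) := by rw [h1]
  _ = ptc q (a + -c) ((ρ (a - c))⁻¹ p) := by
      rw [Equiv.Perm.inv_def, Equiv.symm_apply_apply]
      rw [sub_eq_add_neg]

lemma IsL.congr_c {q : ℕ} {f : Equiv.Perm Circ} {c c' : Circ} {ρ : Circ → Equiv.Perm (Fin q)}
    (hf : IsL q f c ρ) (h : c = c') : IsL q f c' ρ := h ▸ hf

lemma IsL.one (q : ℕ) : IsL q 1 0 (fun _ => 1) := by
  intro a p; simp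

/-- the subgroup of permutations of the circle admitting a lift with translation part in `C`
and local permutations in `P`. -/
def LGen (q : ℕ) (C : AddSubgroup Circ) (P : Subgroup (Equiv.Perm (Fin q))) :
    Subgroup (Equiv.Perm Circ) where
  carrier := {f | ∃ c ∈ C, ∃ ρ : Circ → Equiv.Perm (Fin q), (∀ a, ρ a ∈ P) ∧ IsL q f c ρ}
  one_mem' := ⟨0, zero_mem C, fun _ => 1, fun _ => one_mem P, IsL.one q⟩
  mul_mem' := by
    rintro f g ⟨c, hc, ρ, hρ, hf⟩ ⟨c', hc', ρ', hρ', hg⟩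
    exact ⟨c' + c, add_mem hc' hc, _, fun a => mul_mem (hρ _) (hρ' _), hf.mul hg⟩
  inv_mem' := by
    rintro f ⟨c, hc, ρ, hρ, hf⟩
    exact ⟨-c, neg_mem hc, _, fun a => inv_mem (hρ _), hf.inv⟩

lemma mem_LGen {q : ℕ} {C : AddSubgroup Circ} {P : Subgroup (Equiv.Perm (Fin q))}
    {f : Equiv.Perm Circ} :
    f ∈ LGen q C P ↔ ∃ c ∈ C, ∃ ρ : Circ → Equiv.Perm (Fin q), (∀ a, ρ a ∈ P) ∧ IsL q f c ρ :=
  Iff.rfl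

/-- the subgroup of permutations of the circle admitting a lift with translation part in `C`,
local permutations in `W`, constant modulo `⁅W,W⁆`. -/
def LTwo (q : ℕ) (C : AddSubgroup Circ) (W : Subgroup (Equiv.Perm (Fin q))) :
    Subgroup (Equiv.Perm Circ) where
  carrier := {f | ∃ c ∈ C, ∃ ρ : Circ → Equiv.Perm (Fin q),
    (∀ a, ρ a ∈ W) ∧ (∀ a b, ρ a * (ρ b)⁻¹ ∈ ⁅W, W⁆) ∧ IsL q f c ρ}
  one_mem' := ⟨0, zero_mem C, fun _ => 1, fun _ => one_mem W,
    fun _ _ => by simpa using one_mem _, IsL.one q⟩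
  mul_mem' := by
    rintro f g ⟨c, hc, ρ, hρ, hρρ, hf⟩ ⟨c', hc', ρ', hρ', hρρ', hg⟩
    refine ⟨c' + c, add_mem hc' hc, _, fun a => mul_mem (hρ _) (hρ' _), ?_, hf.mul hg⟩
    intro a b
    exact gt_two W (hρ _) (hρρ _ _) (hρρ' _ _)
  inv_mem' := by
    rintro f ⟨c, hc, ρ, hρ, hρρ, hf⟩
    refine ⟨-c, neg_mem hc, _, fun a => inv_mem (hρ _), ?_, hf.inv⟩
    intro a b
    have h1 : ρ (a - c) * (ρ (b - c))⁻¹ ∈ ⁅W, W⁆ := hρρ _ _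
    have key : (ρ (a - c))⁻¹ * ((ρ (b - c))⁻¹)⁻¹
        = (ρ (a - c))⁻¹ * ((ρ (a - c)) * (ρ (b - c))⁻¹)⁻¹ * ((ρ (a - c))⁻¹)⁻¹ := by group
    rw [key]
    exact conj_mem_comm W (inv_mem (hρ _)) (inv_mem h1)

/-- a commutator of two elements of `LTwo` lies in `LGen ⊥ ⁅W,W⁆`. -/
lemma commutator_mem_LGen {q : ℕ} {C : AddSubgroup Circ} {W : Subgroup (Equiv.Perm (Fin q))}
    {f g : Equiv.Perm Circ} (hf : f ∈ LTwo q C W) (hg : g ∈ LTwo q C W) :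
    ⁅f, g⁆ ∈ LGen q ⊥ ⁅W, W⁆ := by
  obtain ⟨c, -, ρ, hρ, hρρ, hLf⟩ := hf
  obtain ⟨c', -, ρ', hρ', hρρ', hLg⟩ := hg
  have h1 : IsL q (f * g) (c' + c) _ := hLf.mul hLg
  have h2 : IsL q (f⁻¹ * g⁻¹) (-c' + -c) _ := (hLf.inv).mul (hLg.inv)
  have h3 : IsL q ((f * g) * (f⁻¹ * g⁻¹)) ((-c' + -c) + (c' + c)) _ := h1.mul h2
  have h4 : IsL q ⁅f, g⁆ 0
      (fun a => ρ (a + (-c' + -c) + c') * ρ' (a + (-c' + -c))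
        * ((ρ (a + -c' - c))⁻¹ * (ρ' (a - c'))⁻¹)) := by
    have hc0 : ((-c' + -c) + (c' + c)) = 0 := by abel
    have hcomm : ⁅f, g⁆ = (f * g) * (f⁻¹ * g⁻¹) := by group
    rw [hcomm]
    exact h3.congr_c hc0
  refine ⟨0, AddSubgroup.mem_bot.mpr rfl, _, ?_, h4⟩
  intro a
  have hmem := gt_one W (hρ (a + -c' - c)) (hρ' (a - c'))
    (hρρ (a + (-c' + -c) + c') (a + -c' - c)) (hρρ' (a + (-c' + -c)) (a - c'))
  simpa [mul_assoc] using hmem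
lemma circ_coe_zsmul (z : ℤ) (r : ℝ) : ((z • r : ℝ) : Circ) = z • ((r : ℝ) : Circ) := by
  exact map_zsmul (QuotientAddGroup.mk' (AddSubgroup.zmultiples (1:ℝ))) z r

lemma ratpts_coe (q : ℕ) (z : ℤ) : (((z:ℝ)/(q:ℝ) : ℝ) : Circ) ∈ RatPts q := by
  refine AddSubgroup.mem_zmultiples_iff.mpr ⟨z, ?_⟩
  rw [← circ_coe_zsmul]
  congr 1
  rw [zsmul_eq_mul]
  ring

lemma ratpts_nat_div (q : ℕ) (n : ℕ) : (((n:ℝ)/(q:ℝ) : ℝ) : Circ) ∈ RatPts q := by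
  have := ratpts_coe q (n:ℤ)
  push_cast at this
  exact this

lemma fin_frac_lt_one {q : ℕ} (hq : 0 < q) (r : Fin q) {u : ℝ} (hu0 : 0 ≤ u)
    (huq : u < 1/(q:ℝ)) : ((r:ℕ):ℝ)/(q:ℝ) + u ∈ Set.Ico (0:ℝ) (0 + 1) := by
  have hq' : (0:ℝ) < q := by exact_mod_cast hq
  have h2 : ((r:ℕ):ℝ) + 1 ≤ (q:ℝ) := by exact_mod_cast r.isLt
  have hqu : (q:ℝ) * u < 1 := by
    calc (q:ℝ) * u < (q:ℝ) * (1/(q:ℝ)) := by exact mul_lt_mul_of_pos_left huq hq'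
    _ = 1 := by field_simp
  constructor
  · positivity
  · rw [zero_add, div_add' _ _ _ (ne_of_gt hq'), div_lt_one hq']
    nlinarith

/-- uniqueness of the fiber decomposition. -/
lemma decomp_unique (q : ℕ) (hq : 0 < q) (k k' : Fin q) (t t' : ℝ)
    (ht0 : 0 ≤ t) (htq : t < 1/(q:ℝ)) (ht0' : 0 ≤ t') (htq' : t' < 1/(q:ℝ))
    (h : ((((k:ℕ):ℝ)/(q:ℝ) + t : ℝ) : Circ) = ((((k':ℕ):ℝ)/(q:ℝ) + t' : ℝ) : Circ)) :
    k = k' ∧ t = t' := by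
  haveI : Fact ((0:ℝ) < 1) := ⟨one_pos⟩
  have hq' : (0:ℝ) < q := by exact_mod_cast hq
  have e : ((k:ℕ):ℝ)/(q:ℝ) + t = ((k':ℕ):ℝ)/(q:ℝ) + t' :=
    (AddCircle.coe_eq_coe_iff_of_mem_Ico (fin_frac_lt_one hq k ht0 htq)
      (fin_frac_lt_one hq k' ht0' htq')).mp h
  have hdiff : ((k:ℕ):ℝ) - ((k':ℕ):ℝ) = (q:ℝ) * (t' - t) := by
    field_simp at e ⊢
    linarith
  have hb1 : (q:ℝ) * (t' - t) < 1 := by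
    have : (q:ℝ) * t' < 1 := by
      calc (q:ℝ) * t' < (q:ℝ) * (1/(q:ℝ)) := mul_lt_mul_of_pos_left htq' hq'
      _ = 1 := by field_simp
    nlinarith
  have hb2 : -1 < (q:ℝ) * (t' - t) := by
    have : (q:ℝ) * t < 1 := by
      calc (q:ℝ) * t < (q:ℝ) * (1/(q:ℝ)) := mul_lt_mul_of_pos_left htq hq'
      _ = 1 := by field_simp
    nlinarith
  have hkk : (k:ℕ) = (k':ℕ) := by
    have h1 : ((k:ℕ):ℝ) < ((k':ℕ):ℝ) + 1 := by linarith [hdiff, hb1]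
    have h2 : ((k':ℕ):ℝ) < ((k:ℕ):ℝ) + 1 := by linarith [hdiff, hb2]
    have h1' : (k:ℕ) < (k':ℕ) + 1 := by exact_mod_cast h1
    have h2' : (k':ℕ) < (k:ℕ) + 1 := by exact_mod_cast h2
    omega
  refine ⟨Fin.ext hkk, ?_⟩
  rw [hkk] at e
  linarith
section Ework
variable {q : ℕ} [NeZero q] {E : Equiv.Perm (Fin q) → Equiv.Perm Circ}

lemma E_ptc (hE : ∀ (τ : Equiv.Perm (Fin q)) (i : Fin q) (t : ℝ), 0 ≤ t → t < 1 / q →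
      E τ ((((i : ℕ) : ℝ) / q + t : ℝ) : Circ) = ((((τ i : ℕ) : ℝ) / q + t : ℝ) : Circ))
    (τ : Equiv.Perm (Fin q)) (k : Fin q) {t : ℝ} (ht0 : 0 ≤ t) (htq : t < 1/(q:ℝ))
    (p : Fin q) :
    E τ (ptc q ((((k:ℕ):ℝ)/(q:ℝ) + t : ℝ) : Circ) p)
      = ptc q ((((k:ℕ):ℝ)/(q:ℝ) + t : ℝ) : Circ)
        (((finRotate q ^ (k:ℕ))⁻¹ * τ * finRotate q ^ (k:ℕ)) p) := by
  have hq0 : 0 < q := Nat.pos_of_ne_zero (NeZero.ne q)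
  have harg : ptc q ((((k:ℕ):ℝ)/(q:ℝ) + t : ℝ) : Circ) p
      = (((((k+p : Fin q):ℕ):ℝ)/(q:ℝ) + t : ℝ) : Circ) := by
    show (((((k:ℕ):ℝ)/(q:ℝ) + t) + ((p:ℕ):ℝ)/(q:ℝ) : ℝ) : Circ) = _
    have h1 : ((((k:ℕ):ℝ)/(q:ℝ) + t) + ((p:ℕ):ℝ)/(q:ℝ) : ℝ)
        = ((((k:ℕ) + (p:ℕ) : ℕ):ℝ)/(q:ℝ) + t : ℝ) := by push_cast; ring
    rw [h1]
    exact circ_div_q_eq q hq0 _ _ t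
      (by rw [Fin.val_add, Nat.mod_mod_of_dvd _ dvd_rfl])
  have hfix : (finRotate q ^ (k:ℕ)) (τ (p + k) - k) = τ (p + k) := by
    rw [finRotate_pow_apply, Fin.cast_val_eq_self, sub_add_cancel]
  have hperm : ((finRotate q ^ (k:ℕ))⁻¹ * τ * finRotate q ^ (k:ℕ)) p = τ (p + k) - k := by
    rw [Equiv.Perm.mul_apply, Equiv.Perm.mul_apply, finRotate_pow_apply,
      Fin.cast_val_eq_self]
    conv_lhs => rw [← hfix]
    rw [Equiv.Perm.inv_def, Equiv.symm_apply_apply]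
  rw [harg, hE τ (k+p) t ht0 htq, hperm]
  show _ = (((((k:ℕ):ℝ)/(q:ℝ) + t) + (((τ (p + k) - k : Fin q):ℕ):ℝ)/(q:ℝ) : ℝ) : Circ)
  have h2 : ((((k:ℕ):ℝ)/(q:ℝ) + t) + (((τ (p + k) - k : Fin q):ℕ):ℝ)/(q:ℝ) : ℝ)
      = ((((k:ℕ) + ((τ (p + k) - k : Fin q):ℕ) : ℕ):ℝ)/(q:ℝ) + t : ℝ) := by push_cast; ring
  rw [h2]
  apply circ_div_q_eq q hq0
  have h3 : (τ (p + k) - k) + k = τ (p + k) := sub_add_cancel _ _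
  have h4 := congrArg Fin.val h3
  rw [Fin.val_add] at h4
  rw [add_comm k p, Nat.add_comm ((k:ℕ)) _, h4, Nat.mod_eq_of_lt (τ (p + k)).isLt]

lemma E_ptc' (hE : ∀ (τ : Equiv.Perm (Fin q)) (i : Fin q) (t : ℝ), 0 ≤ t → t < 1 / q →
      E τ ((((i : ℕ) : ℝ) / q + t : ℝ) : Circ) = ((((τ i : ℕ) : ℝ) / q + t : ℝ) : Circ))
    (τ : Equiv.Perm (Fin q)) (a : Circ) (k : Fin q) {t : ℝ} (ht0 : 0 ≤ t) (htq : t < 1/(q:ℝ))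
    (ha : a = ((((k:ℕ):ℝ)/(q:ℝ) + t : ℝ) : Circ)) (p : Fin q) :
    E τ (ptc q a p) = ptc q a (((finRotate q ^ (k:ℕ))⁻¹ * τ * finRotate q ^ (k:ℕ)) p) := by
  subst ha; exact E_ptc hE τ k ht0 htq p

/-- every `E τ` admits a lift with trivial translation part, whose local permutations are
conjugates of `τ` by powers of the cycle, explicitly determined by the fiber decomposition. -/
lemma exists_lift_E (hE : ∀ (τ : Equiv.Perm (Fin q)) (i : Fin q) (t : ℝ), 0 ≤ t → t < 1 / q →
      E τ ((((i : ℕ) : ℝ) / q + t : ℝ) : Circ) = ((((τ i : ℕ) : ℝ) / q + t : ℝ) : Circ))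
    (τ : Equiv.Perm (Fin q)) :
    ∃ ρ : Circ → Equiv.Perm (Fin q), IsL q (E τ) 0 ρ ∧
      (∀ (a : Circ) (k : Fin q) (t : ℝ), 0 ≤ t → t < 1/(q:ℝ) →
        a = ((((k:ℕ):ℝ)/(q:ℝ) + t : ℝ) : Circ) →
        ρ a = (finRotate q ^ (k:ℕ))⁻¹ * τ * finRotate q ^ (k:ℕ)) := by
  have hq0 : 0 < q := Nat.pos_of_ne_zero (NeZero.ne q)
  have hd := fun a => circ_decomp q hq0 a
  choose kf tf ht0f htqf haf using hd
  refine ⟨fun a => (finRotate q ^ ((kf a):ℕ))⁻¹ * τ * finRotate q ^ ((kf a):ℕ), ?_, ?_⟩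
  · intro a p
    rw [add_zero]
    exact E_ptc' hE τ a (kf a) (ht0f a) (htqf a) (haf a) p
  · intro a k t ht0 htq ha
    obtain ⟨hk, -⟩ := decomp_unique q hq0 (kf a) k (tf a) t (ht0f a) (htqf a) ht0 htq
      (by rw [← haf a, ← ha])
    show (finRotate q ^ ((kf a):ℕ))⁻¹ * τ * finRotate q ^ ((kf a):ℕ) = _
    rw [hk]

lemma E_delta (hE : ∀ (τ : Equiv.Perm (Fin q)) (i : Fin q) (t : ℝ), 0 ≤ t → t < 1 / q →
      E τ ((((i : ℕ) : ℝ) / q + t : ℝ) : Circ) = ((((τ i : ℕ) : ℝ) / q + t : ℝ) : Circ))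
    (τ : Equiv.Perm (Fin q)) (y : Circ) : E τ y - y ∈ RatPts q := by
  have hq0 : 0 < q := Nat.pos_of_ne_zero (NeZero.ne q)
  obtain ⟨k, t, ht0, htq, rfl⟩ := circ_decomp q hq0 y
  rw [hE τ k t ht0 htq]
  have : ((((τ k : ℕ) : ℝ) / q + t : ℝ) : Circ) - ((((k : ℕ) : ℝ) / q + t : ℝ) : Circ)
      = (((((τ k : ℕ):ℤ) - ((k:ℕ):ℤ) : ℤ):ℝ)/(q:ℝ) : ℝ) := by
    show ((((((τ k : ℕ) : ℝ) / q + t) - (((k : ℕ) : ℝ) / q + t)) : ℝ) : Circ) = _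
    congr 1
    push_cast
    ring
  rw [this]
  exact ratpts_coe q _

end Ework
def Ngrp (m q : ℕ) (τs : Fin m → Equiv.Perm (Fin q)) : Subgroup (Equiv.Perm (Fin q)) :=
  Subgroup.closure
      {π : Equiv.Perm (Fin q) | ∃ p < q, ∃ τ ∈ SQgrp m q τs,
        π = finRotate q ^ p * τ * (finRotate q ^ p)⁻¹}

section RotL

lemma Rot_apply (a z : Circ) : Rot a z = z + a := rfl

lemma IsL_Rot (q : ℕ) (b : Circ) : IsL q (Rot b) b (fun _ => 1) := by
  intro a p
  show ptc q a p + b = ptc q (a + b) ((1 : Equiv.Perm (Fin q)) p)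
  rw [Equiv.Perm.one_apply, ptc_add]

lemma Rot_add (a b : Circ) : Rot (a + b) = Rot a * Rot b := by
  ext z; show z + (a + b) = (z + b) + a; abel

lemma Rot_zero : Rot (0 : Circ) = 1 := by
  ext z; show z + 0 = z; abel

lemma Rot_neg (a : Circ) : Rot (-a) = (Rot a)⁻¹ := by
  apply eq_inv_of_mul_eq_one_left
  rw [← Rot_add, neg_add_cancel, Rot_zero]

lemma Rot_mem_Hgrp {s m q : ℕ} {α : Fin s → ℝ} {τs : Fin m → Equiv.Perm (Fin q)}
    {E : Equiv.Perm (Fin q) → Equiv.Perm Circ} {a : Circ} (ha : a ∈ Agrp s α) :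
    Rot a ∈ Hgrp s m q α τs E := by
  induction ha using AddSubgroup.closure_induction with
  | mem x hx =>
      obtain ⟨i, rfl⟩ := hx
      exact Subgroup.subset_closure (Or.inl ⟨i, rfl⟩)
  | zero => rw [Rot_zero]; exact one_mem _
  | add x y hx hy hx' hy' => rw [Rot_add]; exact mul_mem hx' hy'
  | neg x hx hx' => rw [Rot_neg]; exact inv_mem hx'

end RotL
section Arith
variable {s : ℕ} {α : Fin s → ℝ}

lemma mem_Agrp_rep {c : Circ} (hc : c ∈ Agrp s α) :
    ∃ n : Fin s → ℤ, ((∑ i, (n i : ℝ) * α i : ℝ) : Circ) = c := by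
  induction hc using AddSubgroup.closure_induction with
  | mem x hx =>
      obtain ⟨j, rfl⟩ := hx
      refine ⟨Pi.single j 1, ?_⟩
      congr 1
      rw [Finset.sum_eq_single j]
      · simp
      · intro i _ hij
        rw [Pi.single_eq_of_ne hij]
        simp
      · simp
  | zero => exact ⟨0, by simp⟩
  | add x y hx hy hx' hy' =>
      obtain ⟨n, hn⟩ := hx'
      obtain ⟨n', hn'⟩ := hy'
      refine ⟨n + n', ?_⟩
      rw [← hn, ← hn']
      show ((_ : ℝ) : Circ) = ((_ + _ : ℝ) : Circ)
      congr 1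
      rw [← Finset.sum_add_distrib]
      apply Finset.sum_congr rfl
      intro i _
      simp only [Pi.add_apply]
      push_cast
      ring
  | neg x hx hx' =>
      obtain ⟨n, hn⟩ := hx'
      refine ⟨-n, ?_⟩
      rw [← hn]
      show ((_ : ℝ) : Circ) = ((-(_) : ℝ) : Circ)
      congr 1
      rw [← Finset.sum_neg_distrib]
      apply Finset.sum_congr rfl
      intro i _
      simp only [Pi.neg_apply]
      push_cast
      ring

/-- linear independence of `1, α₁, …, α_s` over `ℚ` implies that the only element of `A`
that is also a rational point is `0`. -/
lemma Agrp_inf_RatPts (hα : LinearIndependent ℚ (Fin.cons (1 : ℝ) α)) (q : ℕ) (hq : 0 < q)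
    {c : Circ} (hc : c ∈ Agrp s α) (hr : c ∈ RatPts q) : c = 0 := by
  obtain ⟨n, hn⟩ := mem_Agrp_rep hc
  set r : ℝ := ∑ i, (n i : ℝ) * α i with hrdef
  obtain ⟨z, hz⟩ := AddSubgroup.mem_zmultiples_iff.mp hr
  have hz' : ((z • ((q:ℝ)⁻¹) : ℝ) : Circ) = c := by rw [circ_coe_zsmul]; exact hz
  have h0 : ((r - z • ((q:ℝ)⁻¹) : ℝ) : Circ) = 0 := by
    have h0' : ((r - z • ((q:ℝ)⁻¹) : ℝ) : Circ) = ((r:ℝ):Circ) - ((z • ((q:ℝ)⁻¹) : ℝ) : Circ) := rfl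
    rw [h0', hn, hz', sub_self]
  obtain ⟨w, hw⟩ := (AddCircle.coe_eq_zero_iff (1:ℝ)).mp h0
  rw [zsmul_eq_mul, zsmul_eq_mul] at hw
  have hw' : r = (z:ℝ) * (q:ℝ)⁻¹ + (w:ℝ) := by linarith
  have hsum : ∑ i, (Fin.cons ((z:ℚ)/(q:ℚ) + (w:ℚ)) (fun i => -(n i : ℚ)) : Fin (s+1) → ℚ) i
      • (Fin.cons (1:ℝ) α : Fin (s+1) → ℝ) i = 0 := by
    rw [Fin.sum_univ_succ]
    simp only [Fin.cons_succ, Fin.cons_zero, Rat.smul_def]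
    have h1 : (((z:ℚ)/(q:ℚ) + (w:ℚ) : ℚ) : ℝ) = (z:ℝ) * (q:ℝ)⁻¹ + (w:ℝ) := by
      push_cast
      ring
    have h2 : ∑ i, ((-(n i : ℚ) : ℚ) : ℝ) * α i = -r := by
      rw [hrdef, ← Finset.sum_neg_distrib]
      apply Finset.sum_congr rfl
      intro i _
      push_cast
      ring
    rw [h2, mul_one, h1, hw']
    ring
  have hzero := (Fintype.linearIndependent_iff.mp hα) _ hsum
  have hnz : ∀ i, n i = 0 := by
    intro i
    have h3 := hzero i.succ
    simp only [Fin.cons_succ] at h3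
    exact_mod_cast neg_eq_zero.mp h3
  have hr0 : r = 0 := by
    rw [hrdef]
    apply Finset.sum_eq_zero
    intro i _
    rw [hnz i]
    simp
  rw [← hn, hr0]
  norm_num

/-- `α₀` admits no integer relation. -/
lemma alpha0_not_rat (hs : 1 ≤ s) (hα : LinearIndependent ℚ (Fin.cons (1 : ℝ) α))
    (z₁ z₂ : ℤ) (h : (z₁:ℝ) * (α ⟨0, hs⟩) = (z₂:ℝ)) : z₁ = 0 := by
  have hsum : ∑ i, (Fin.cons (-(z₂:ℚ)) (Pi.single ⟨0, hs⟩ (z₁:ℚ)) : Fin (s+1) → ℚ) i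
      • (Fin.cons (1:ℝ) α : Fin (s+1) → ℝ) i = 0 := by
    rw [Fin.sum_univ_succ]
    simp only [Fin.cons_succ, Fin.cons_zero, Rat.smul_def]
    have h2 : ∑ i, (((Pi.single (⟨0, hs⟩ : Fin s) ((z₁:ℚ)) : Fin s → ℚ) i : ℚ) : ℝ) * α i
        = (z₁:ℝ) * α ⟨0, hs⟩ := by
      rw [Finset.sum_eq_single (⟨0, hs⟩ : Fin s)]
      · simp
      · intro i _ hij
        rw [Pi.single_eq_of_ne hij]
        simp
      · simp
    rw [h2, h, mul_one]
    push_cast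
    ring
  have hzero := (Fintype.linearIndependent_iff.mp hα) _ hsum
  have h4 := hzero (Fin.succ ⟨0, hs⟩)
  simp only [Fin.cons_succ, Pi.single_eq_same] at h4
  exact_mod_cast h4

lemma dense_one_alpha (hs : 1 ≤ s) (hα : LinearIndependent ℚ (Fin.cons (1 : ℝ) α)) :
    Dense ((AddSubgroup.closure {(1:ℝ), α ⟨0, hs⟩} : AddSubgroup ℝ) : Set ℝ) := by
  rcases AddSubgroup.dense_or_cyclic (AddSubgroup.closure {(1:ℝ), α ⟨0, hs⟩}) with h | ⟨b, hb⟩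
  · exact h
  · exfalso
    have h1 : (1:ℝ) ∈ AddSubgroup.closure {(1:ℝ), α ⟨0, hs⟩} :=
      AddSubgroup.subset_closure (by simp)
    have h2 : α ⟨0, hs⟩ ∈ AddSubgroup.closure {(1:ℝ), α ⟨0, hs⟩} :=
      AddSubgroup.subset_closure (by simp)
    rw [hb] at h1 h2
    obtain ⟨z₁, hz₁⟩ := AddSubgroup.mem_closure_singleton.mp h1
    obtain ⟨z₂, hz₂⟩ := AddSubgroup.mem_closure_singleton.mp h2
    have key : (z₁:ℝ) * α ⟨0, hs⟩ = (z₂:ℝ) := by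
      have e1 : z₁ • (z₂ • b) = z₂ • (z₁ • b) := smul_comm z₁ z₂ b
      rw [hz₂, hz₁] at e1
      rw [zsmul_eq_mul, zsmul_eq_mul] at e1
      rw [e1, mul_one]
    have hz10 : z₁ = 0 := alpha0_not_rat hs hα z₁ z₂ key
    rw [hz10] at hz₁
    simp at hz₁

lemma coe_mem_Agrp (hs : 1 ≤ s) {u : ℝ}
    (hu : u ∈ AddSubgroup.closure {(1:ℝ), α ⟨0, hs⟩}) : ((u:ℝ):Circ) ∈ Agrp s α := by
  induction hu using AddSubgroup.closure_induction with
  | mem x hx =>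
      simp only [Set.mem_insert_iff, Set.mem_singleton_iff] at hx
      rcases hx with rfl | rfl
      · have h5 : (((1:ℝ)):Circ) = 0 := by exact_mod_cast AddCircle.coe_period (1:ℝ)
        rw [h5]
        exact zero_mem _
      · exact AddSubgroup.subset_closure ⟨⟨0, hs⟩, rfl⟩
  | zero =>
      have h5 : (((0:ℝ)):Circ) = 0 := by norm_num
      rw [h5]; exact zero_mem _
  | add u v hu hv hu' hv' =>
      have h5 : (((u + v:ℝ)):Circ) = ((u:ℝ):Circ) + ((v:ℝ):Circ) := rfl
      rw [h5]; exact add_mem hu' hv'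
  | neg u hu hu' =>
      have h5 : (((-u:ℝ)):Circ) = -((u:ℝ):Circ) := rfl
      rw [h5]; exact neg_mem hu'

lemma exists_fiber_a (hs : 1 ≤ s) (hα : LinearIndependent ℚ (Fin.cons (1 : ℝ) α))
    (q : ℕ) (hq : 0 < q) (y : ℝ) (k : Fin q) :
    ∃ (gr t : ℝ), ((gr:ℝ):Circ) ∈ Agrp s α ∧ 0 ≤ t ∧ t < 1/(q:ℝ) ∧
      ((y:ℝ):Circ) - ((gr:ℝ):Circ) = ((((k:ℕ):ℝ)/(q:ℝ) + t : ℝ) : Circ) := by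
  have hq' : (0:ℝ) < q := by exact_mod_cast hq
  have hlt : y - ((k:ℕ):ℝ)/(q:ℝ) - 1/(q:ℝ) < y - ((k:ℕ):ℝ)/(q:ℝ) := by
    have : (0:ℝ) < 1/(q:ℝ) := by positivity
    linarith
  obtain ⟨gr, hgr, hgIoo⟩ := (dense_one_alpha hs hα).exists_between hlt
  refine ⟨gr, y - ((k:ℕ):ℝ)/(q:ℝ) - gr, coe_mem_Agrp hs hgr, ?_, ?_, ?_⟩
  · linarith [hgIoo.2]
  · linarith [hgIoo.1]
  · show (((y - gr : ℝ)) : Circ) = _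
    congr 1
    ring

end Arith
section Sigma
variable {q : ℕ} [NeZero q]

lemma sigma_zpow_natmod (z : ℤ) :
    (finRotate q : Equiv.Perm (Fin q)) ^ z = finRotate q ^ (((z % (q:ℤ)).toNat : ℕ)) := by
  have hq0 : 0 < q := Nat.pos_of_ne_zero (NeZero.ne q)
  have hq0' : (0:ℤ) < q := by exact_mod_cast hq0
  have h0 : 0 ≤ z % (q:ℤ) := Int.emod_nonneg z (by exact_mod_cast hq0.ne')
  have hdecomp : z = (q:ℤ) * (z / (q:ℤ)) + z % (q:ℤ) := (Int.mul_ediv_add_emod z (q:ℤ)).symm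
  calc (finRotate q : Equiv.Perm (Fin q)) ^ z
      = (finRotate q) ^ ((q:ℤ) * (z / (q:ℤ)) + z % (q:ℤ)) := by rw [← hdecomp]
  _ = ((finRotate q ^ (q:ℤ)) ^ (z / (q:ℤ))) * (finRotate q) ^ (z % (q:ℤ)) := by
      rw [zpow_add, zpow_mul]
  _ = (finRotate q) ^ (z % (q:ℤ)) := by
      rw [zpow_natCast, finRotate_pow_q, one_zpow, one_mul]
  _ = (finRotate q) ^ (((z % (q:ℤ)).toNat : ℕ)) := by
      rw [← zpow_natCast (finRotate q) ((z % (q:ℤ)).toNat), Int.toNat_of_nonneg h0]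

lemma sigma_zpow_inv_eq (k : Fin q) :
    (finRotate q ^ ((k:ℕ)))⁻¹ = (finRotate q : Equiv.Perm (Fin q)) ^ (-((k:ℕ):ℤ)) := by
  rw [zpow_neg, zpow_natCast]

end Sigma

section Ngrps
variable {m q : ℕ} [NeZero q] {τs : Fin m → Equiv.Perm (Fin q)}

lemma zconj_mem_Ngrp {τ : Equiv.Perm (Fin q)} (hτ : τ ∈ SQgrp m q τs) (z : ℤ) :
    (finRotate q : Equiv.Perm (Fin q)) ^ z * τ * ((finRotate q : Equiv.Perm (Fin q)) ^ z)⁻¹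
      ∈ Ngrp m q τs := by
  have hq0 : 0 < q := Nat.pos_of_ne_zero (NeZero.ne q)
  have hlt : (z % (q:ℤ)).toNat < q := by
    have h1 : z % (q:ℤ) < (q:ℤ) := Int.emod_lt_of_pos z (by exact_mod_cast hq0)
    omega
  rw [sigma_zpow_natmod z]
  exact Subgroup.subset_closure ⟨(z % (q:ℤ)).toNat, hlt, τ, hτ, rfl⟩

lemma tau_mem_SQgrp (j : Fin m) : τs j ∈ SQgrp m q τs :=
  Subgroup.subset_closure ⟨j, rfl⟩

lemma SQ_le_Ngrp {τ : Equiv.Perm (Fin q)} (hτ : τ ∈ SQgrp m q τs) : τ ∈ Ngrp m q τs := by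
  have := zconj_mem_Ngrp (τs := τs) hτ 0
  simpa using this

lemma finconj_mem_Ngrp {τ : Equiv.Perm (Fin q)} (hτ : τ ∈ SQgrp m q τs) (k : Fin q) :
    (finRotate q ^ ((k:ℕ)))⁻¹ * τ * finRotate q ^ ((k:ℕ)) ∈ Ngrp m q τs := by
  have h := zconj_mem_Ngrp (τs := τs) hτ (-((k:ℕ):ℤ))
  rw [zpow_neg, zpow_natCast, inv_inv] at h
  exact h

lemma Ngrp_zconj (z : ℤ) {n : Equiv.Perm (Fin q)} (hn : n ∈ Ngrp m q τs) :
    (finRotate q : Equiv.Perm (Fin q)) ^ z * n * ((finRotate q : Equiv.Perm (Fin q)) ^ z)⁻¹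
      ∈ Ngrp m q τs := by
  induction hn using Subgroup.closure_induction with
  | mem x hx =>
      obtain ⟨p, hp, τ, hτ, rfl⟩ := hx
      have key : (finRotate q : Equiv.Perm (Fin q)) ^ z
            * (finRotate q ^ p * τ * (finRotate q ^ p)⁻¹)
            * ((finRotate q : Equiv.Perm (Fin q)) ^ z)⁻¹
          = (finRotate q : Equiv.Perm (Fin q)) ^ (z + (p:ℤ)) * τ
            * ((finRotate q : Equiv.Perm (Fin q)) ^ (z + (p:ℤ)))⁻¹ := by
        rw [zpow_add, zpow_natCast]
        group
      rw [key]
      exact zconj_mem_Ngrp hτ _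
  | one => simpa using one_mem (Ngrp m q τs)
  | mul a b ha hb ha' hb' =>
      have key : (finRotate q : Equiv.Perm (Fin q)) ^ z * (a * b)
            * ((finRotate q : Equiv.Perm (Fin q)) ^ z)⁻¹
          = ((finRotate q : Equiv.Perm (Fin q)) ^ z * a
              * ((finRotate q : Equiv.Perm (Fin q)) ^ z)⁻¹)
            * ((finRotate q : Equiv.Perm (Fin q)) ^ z * b
              * ((finRotate q : Equiv.Perm (Fin q)) ^ z)⁻¹) := by group
      rw [key]
      exact mul_mem ha' hb'
  | inv a ha ha' =>
      have key : (finRotate q : Equiv.Perm (Fin q)) ^ z * a⁻¹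
            * ((finRotate q : Equiv.Perm (Fin q)) ^ z)⁻¹
          = ((finRotate q : Equiv.Perm (Fin q)) ^ z * a
              * ((finRotate q : Equiv.Perm (Fin q)) ^ z)⁻¹)⁻¹ := by group
      rw [key]
      exact inv_mem ha'

lemma sigma_mem_Wgrp : (finRotate q : Equiv.Perm (Fin q)) ∈ Wgrp m q τs :=
  Subgroup.subset_closure (Or.inl rfl)

lemma tau_mem_Wgrp (j : Fin m) : τs j ∈ Wgrp m q τs :=
  Subgroup.subset_closure (Or.inr ⟨j, rfl⟩)

lemma SQ_le_Wgrp {τ : Equiv.Perm (Fin q)} (hτ : τ ∈ SQgrp m q τs) : τ ∈ Wgrp m q τs := by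
  refine Subgroup.closure_le (Wgrp m q τs) |>.mpr ?_ hτ
  rintro x ⟨j, rfl⟩
  exact tau_mem_Wgrp j

lemma Ngrp_le_Wgrp {n : Equiv.Perm (Fin q)} (hn : n ∈ Ngrp m q τs) : n ∈ Wgrp m q τs := by
  refine Subgroup.closure_le (Wgrp m q τs) |>.mpr ?_ hn
  rintro x ⟨p, hp, τ, hτ, rfl⟩
  exact mul_mem (mul_mem (pow_mem sigma_mem_Wgrp p) (SQ_le_Wgrp hτ))
    (inv_mem (pow_mem sigma_mem_Wgrp p))

end Ngrps

/-- if `D` is stable under conjugation by the closure of `S` and contains commutators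
of pairs of elements of `S`, it contains the commutator subgroup of the closure of `S`. -/
lemma commutator_closure_le {G : Type*} [Group G] (S : Set G) (D : Subgroup G)
    (hnorm : ∀ w ∈ Subgroup.closure S, ∀ d ∈ D, w * d * w⁻¹ ∈ D)
    (hbase : ∀ g ∈ S, ∀ h ∈ S, ⁅g, h⁆ ∈ D) :
    ⁅Subgroup.closure S, Subgroup.closure S⁆ ≤ D := by
  have step1 : ∀ g ∈ S, ∀ h ∈ Subgroup.closure S, ⁅g, h⁆ ∈ D := by
    intro g hg h hh
    induction hh using Subgroup.closure_induction with
    | mem x hx => exact hbase g hg x hx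
    | one => simpa using one_mem D
    | mul a b ha hb ha' hb' =>
        have key : ⁅g, a * b⁆ = ⁅g, a⁆ * (a * ⁅g, b⁆ * a⁻¹) := by group
        rw [key]
        exact mul_mem ha' (hnorm a ha _ hb')
    | inv a ha ha' =>
        have key : ⁅g, a⁻¹⁆ = a⁻¹ * ⁅g, a⁆⁻¹ * (a⁻¹)⁻¹ := by group
        rw [key]
        exact hnorm a⁻¹ (inv_mem ha) _ (inv_mem ha')
  rw [Subgroup.commutator_le]
  intro g₁ hg₁ g₂ hg₂
  induction hg₁ using Subgroup.closure_induction with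
  | mem x hx => exact step1 x hx g₂ hg₂
  | one => simpa using one_mem D
  | mul a b ha hb ha' hb' =>
      have key : ⁅a * b, g₂⁆ = (a * ⁅b, g₂⁆ * a⁻¹) * ⁅a, g₂⁆ := by group
      rw [key]
      exact mul_mem (hnorm a ha _ hb') ha'
  | inv a ha ha' =>
      have key : ⁅a⁻¹, g₂⁆ = a⁻¹ * ⁅a, g₂⁆⁻¹ * (a⁻¹)⁻¹ := by group
      rw [key]
      exact hnorm a⁻¹ (inv_mem ha) _ (inv_mem ha')
theorem stmt_8
    (s m q : ℕ) (hs : 1 ≤ s) (hm : 1 ≤ m) (hq : 2 ≤ q)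
    (α : Fin s → ℝ) (hα : LinearIndependent ℚ (Fin.cons (1 : ℝ) α))
    (τs : Fin m → Equiv.Perm (Fin q))
    (E : Equiv.Perm (Fin q) → Equiv.Perm Circ)
    (hE : ∀ (τ : Equiv.Perm (Fin q)) (i : Fin q) (t : ℝ), 0 ≤ t → t < 1 / q →
      E τ ((((i : ℕ) : ℝ) / q + t : ℝ) : Circ) = ((((τ i : ℕ) : ℝ) / q + t : ℝ) : Circ))
    (K : Subgroup (Equiv.Perm Circ)) (hK : K = Hgrp s m q α τs E ⊓ Delta q)
    (x : ℝ) (hx0 : 0 ≤ x) (hxq : x < 1 / q)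
    (ωx : ↥K →* Equiv.Perm (Fin q))
    (hωx : ∀ (f : ↥K) (i : Fin q),
      (f : Equiv.Perm Circ) ((x + ((i : ℕ) : ℝ) / q : ℝ) : Circ)
        = ((x + ((ωx f i : ℕ) : ℝ) / q : ℝ) : Circ)) :
    ωx.range = Subgroup.closure
      {π : Equiv.Perm (Fin q) | ∃ p < q, ∃ τ ∈ SQgrp m q τs,
        π = finRotate q ^ p * τ * (finRotate q ^ p)⁻¹} ∧
    Subgroup.map ωx ((⁅Hgrp s m q α τs E, Hgrp s m q α τs E⁆).subgroupOf K) = ⁅Wgrp m q τs, Wgrp m q τs⁆ := by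
  haveI : NeZero q := ⟨by omega⟩
  have hq0 : 0 < q := by omega
  set X : Circ := ((x:ℝ) : Circ) with hX
  -- the bridge between `ptc` and the hypothesis `hωx`
  have hpt : ∀ (j : Fin q), ptc q X j = ((x + ((j : ℕ) : ℝ) / q : ℝ) : Circ) := fun j => rfl
  -- `ωx` is determined by any lift with trivial translation part
  have hKle : K ≤ Hgrp s m q α τs E ⊓ Delta q := le_of_eq hK
  have hKge : Hgrp s m q α τs E ⊓ Delta q ≤ K := le_of_eq hK.symm
  have omega_det : ∀ (f : ↥K) (ρ : Circ → Equiv.Perm (Fin q)),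
      IsL q (f : Equiv.Perm Circ) 0 ρ → ωx f = ρ X := by
    intro f ρ hL
    apply Equiv.ext
    intro i
    apply ptc_injective q hq0 X
    have h1 : ptc q X (ωx f i) = (f : Equiv.Perm Circ) (ptc q X i) := by
      rw [hpt, hpt]; exact (hωx f i).symm
    rw [h1, hL X i, add_zero]
  -- `H ≤ L₁`
  have H_le_L1 : Hgrp s m q α τs E ≤ LGen q (Agrp s α) (Ngrp m q τs) := by
    rw [Hgrp, Subgroup.closure_le]
    rintro f (⟨i, rfl⟩ | ⟨j, rfl⟩)
    · exact ⟨((α i : ℝ) : Circ), AddSubgroup.subset_closure ⟨i, rfl⟩, fun _ => 1,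
        fun _ => one_mem _, IsL_Rot q _⟩
    · obtain ⟨ρ, hρL, hρspec⟩ := exists_lift_E hE (τs j)
      refine ⟨0, zero_mem _, ρ, ?_, hρL⟩
      intro a
      obtain ⟨k, t, ht0, htq, ha⟩ := circ_decomp q hq0 a
      rw [hρspec a k t ht0 htq ha]
      exact finconj_mem_Ngrp (tau_mem_SQgrp j) k
  -- `H ≤ L₂`
  have H_le_L2 : Hgrp s m q α τs E ≤ LTwo q (Agrp s α) (Wgrp m q τs) := by
    rw [Hgrp, Subgroup.closure_le]
    rintro f (⟨i, rfl⟩ | ⟨j, rfl⟩)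
    · exact ⟨((α i : ℝ) : Circ), AddSubgroup.subset_closure ⟨i, rfl⟩, fun _ => 1,
        fun _ => one_mem _, fun _ _ => by simpa using one_mem _, IsL_Rot q _⟩
    · obtain ⟨ρ, hρL, hρspec⟩ := exists_lift_E hE (τs j)
      have hρW : ∀ a, ρ a ∈ Wgrp m q τs ∧
          ∃ k : Fin q, ρ a = (finRotate q ^ ((k:ℕ)))⁻¹ * τs j * finRotate q ^ ((k:ℕ)) := by
        intro a
        obtain ⟨k, t, ht0, htq, ha⟩ := circ_decomp q hq0 a
        rw [hρspec a k t ht0 htq ha]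
        exact ⟨mul_mem (mul_mem (inv_mem (pow_mem sigma_mem_Wgrp _)) (tau_mem_Wgrp j))
          (pow_mem sigma_mem_Wgrp _), k, rfl⟩
      refine ⟨0, zero_mem _, ρ, fun a => (hρW a).1, ?_, hρL⟩
      intro a b
      obtain ⟨ka, hka⟩ := (hρW a).2
      obtain ⟨kb, hkb⟩ := (hρW b).2
      rw [hka, hkb]
      have key : (finRotate q ^ ((ka:ℕ)))⁻¹ * τs j * finRotate q ^ ((ka:ℕ))
          * ((finRotate q ^ ((kb:ℕ)))⁻¹ * τs j * finRotate q ^ ((kb:ℕ)))⁻¹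
          = (finRotate q ^ ((ka:ℕ)))⁻¹
            * ⁅τs j, finRotate q ^ ((ka:ℕ)) * (finRotate q ^ ((kb:ℕ)))⁻¹⁆
            * finRotate q ^ ((ka:ℕ)) := by
        rw [commutatorElement_def]
        group
      rw [key]
      exact conj_mem_comm _ (inv_mem (pow_mem sigma_mem_Wgrp _))
        (Subgroup.commutator_mem_commutator (tau_mem_Wgrp j)
          (mul_mem (pow_mem sigma_mem_Wgrp _) (inv_mem (pow_mem sigma_mem_Wgrp _))))
  -- a lift with trivial translation part forces membership in `Delta q`
  have IsL_zero_delta : ∀ (f : Equiv.Perm Circ) (ρ : Circ → Equiv.Perm (Fin q)),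
      IsL q f 0 ρ → f ∈ Delta q := by
    intro f ρ hL y
    have h1 : f y = ptc q (y + 0) (ρ y 0) := by
      rw [← hL y 0, ptc_zero]
    rw [h1, add_zero]
    have h2 : ptc q y (ρ y 0) - y = (((((ρ y 0 : Fin q):ℕ):ℝ)/(q:ℝ) : ℝ) : Circ) := by
      rw [ptc]; abel
    rw [h2]
    exact ratpts_nat_div q _
  -- commutators of H lie in `LGen ⊥ [W,W]`
  have commHL : ⁅Hgrp s m q α τs E, Hgrp s m q α τs E⁆ ≤
      LGen q ⊥ ⁅Wgrp m q τs, Wgrp m q τs⁆ := by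
    rw [Subgroup.commutator_le]
    intro g₁ h₁ g₂ h₂
    exact commutator_mem_LGen (H_le_L2 h₁) (H_le_L2 h₂)
  -- claim 1, ⊆ :
  have range_le : ωx.range ≤ Ngrp m q τs := by
    rintro π ⟨f, rfl⟩
    obtain ⟨hfH, hfΔ⟩ := hKle f.2
    obtain ⟨c, hcA, ρ, hρ, hL⟩ := H_le_L1 hfH
    have hdiff : (f : Equiv.Perm Circ) X - X ∈ RatPts q := hfΔ X
    have hfx : (f : Equiv.Perm Circ) X = ptc q (X + c) (ρ X 0) := by
      rw [← hL X 0, ptc_zero]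
    have hdiff2 : ptc q (X + c) (ρ X 0) - X
        = c + ((((((ρ X 0 : Fin q)):ℕ):ℝ)/(q:ℝ) : ℝ) : Circ) := by
      rw [ptc]; abel
    rw [hfx, hdiff2] at hdiff
    have hcR : c ∈ RatPts q := by
      have := sub_mem hdiff (ratpts_nat_div q ((ρ X 0 : Fin q):ℕ))
      simpa using this
    have hc0 : c = 0 := Agrp_inf_RatPts hα q hq0 hcA hcR
    rw [hc0] at hL
    rw [omega_det f ρ hL]
    exact hρ X
  -- the `E`-lift and the value of `ωx` on `E (τs j)`
  choose ρE hρEL hρEspec using fun j => exists_lift_E hE (τs j)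
  -- membership of `E (τs j)` in `K`
  have hEK : ∀ j, E (τs j) ∈ K := by
    intro j
    exact hKge ⟨Subgroup.subset_closure (Or.inr ⟨j, rfl⟩), fun y => E_delta hE (τs j) y⟩
  have hωE : ∀ j, ωx ⟨E (τs j), hEK j⟩ = τs j := by
    intro j
    rw [omega_det ⟨E (τs j), hEK j⟩ (ρE j) (hρEL j)]
    have hXdec : X = ((((((0 : Fin q)):ℕ):ℝ)/(q:ℝ) + x : ℝ) : Circ) := by
      rw [hX]
      norm_num
    rw [hρEspec j X 0 x hx0 hxq hXdec]
    norm_num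
  -- main construction : an element of `K` whose image is a prescribed conjugate of `τs j`
  have constructF : ∀ (k : Fin q) (j : Fin m), ∃ (F : ↥K) (a : Circ), a ∈ Agrp s α ∧
      (F : Equiv.Perm Circ) = Rot a * E (τs j) * (Rot a)⁻¹ ∧
      ωx F = (finRotate q ^ ((k:ℕ)))⁻¹ * τs j * finRotate q ^ ((k:ℕ)) := by
    intro k j
    obtain ⟨gr, t, hgA, ht0, htq, hxa⟩ := exists_fiber_a hs hα q hq0 x k
    set a : Circ := ((gr:ℝ) : Circ) with hadef
    have hIRot : IsL q (Rot a) a (fun _ => 1) := IsL_Rot q a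
    have hIRotInv : IsL q (Rot a)⁻¹ (-a) (fun _ => 1) := by
      rw [← Rot_neg]; exact IsL_Rot q (-a)
    have hInner : IsL q (E (τs j) * (Rot a)⁻¹) (-a + 0)
        (fun b => ρE j (b + -a) * (fun _ => (1 : Equiv.Perm (Fin q))) b) :=
      (hρEL j).mul hIRotInv
    have hF0 : IsL q (Rot a * (E (τs j) * (Rot a)⁻¹)) ((-a + 0) + a)
        (fun b => (fun _ => (1 : Equiv.Perm (Fin q))) (b + (-a + 0))
          * (ρE j (b + -a) * (fun _ => (1 : Equiv.Perm (Fin q))) b)) :=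
      hIRot.mul hInner
    have hF0' : IsL q (Rot a * (E (τs j) * (Rot a)⁻¹)) 0
        (fun b => (fun _ => (1 : Equiv.Perm (Fin q))) (b + (-a + 0))
          * (ρE j (b + -a) * (fun _ => (1 : Equiv.Perm (Fin q))) b)) :=
      hF0.congr_c (by abel)
    have hF0H : Rot a * (E (τs j) * (Rot a)⁻¹) ∈ Hgrp s m q α τs E :=
      mul_mem (Rot_mem_Hgrp hgA)
        (mul_mem (Subgroup.subset_closure (Or.inr ⟨j, rfl⟩)) (inv_mem (Rot_mem_Hgrp hgA)))
    have hF0K : Rot a * (E (τs j) * (Rot a)⁻¹) ∈ K :=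
      hKge ⟨hF0H, IsL_zero_delta _ _ hF0'⟩
    refine ⟨⟨_, hF0K⟩, a, hgA, by rw [mul_assoc], ?_⟩
    rw [omega_det _ _ hF0']
    simp only [one_mul, mul_one]
    have hXa : X + -a = ((((k:ℕ):ℝ)/(q:ℝ) + t : ℝ) : Circ) := by
      rw [← sub_eq_add_neg, hX, hadef]
      exact hxa
    exact hρEspec j (X + -a) k t ht0 htq hXa
  -- claim 1, ⊇ :
  have Ngrp_le_range : Ngrp m q τs ≤ ωx.range := by
    rw [Ngrp, Subgroup.closure_le]
    rintro π ⟨p, hp, τ, hτ, rfl⟩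
    set k : Fin q := ⟨(q - p) % q, Nat.mod_lt _ hq0⟩ with hkdef
    have hkval : ((k:ℕ) + p) % q = 0 := by
      rcases Nat.eq_zero_or_pos p with rfl | hppos
      · simp [hkdef, Nat.mod_self]
      · have h1 : (q - p) % q = q - p := Nat.mod_eq_of_lt (by omega)
        simp only [hkdef, h1]
        have h2 : (q - p) + p = q := by omega
        rw [h2, Nat.mod_self]
    have hinv : finRotate q ^ p = (finRotate q ^ ((k:ℕ)))⁻¹ := by
      apply eq_inv_of_mul_eq_one_right
      rw [← pow_add, ← finRotate_pow_mod q ((k:ℕ) + p), hkval, pow_zero]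
    suffices h : ∀ τ' ∈ SQgrp m q τs,
        (finRotate q ^ ((k:ℕ)))⁻¹ * τ' * finRotate q ^ ((k:ℕ)) ∈ ωx.range by
      have := h τ hτ
      rw [hinv, inv_inv]
      exact this
    intro τ' hτ'
    induction hτ' using Subgroup.closure_induction with
    | mem y hy =>
        obtain ⟨j, rfl⟩ := hy
        obtain ⟨F, a, -, -, hωF⟩ := constructF k j
        exact ⟨F, hωF⟩
    | one => simpa using one_mem ωx.range
    | mul u v hu hv hu' hv' =>
        have key : (finRotate q ^ ((k:ℕ)))⁻¹ * (u * v) * finRotate q ^ ((k:ℕ))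
            = ((finRotate q ^ ((k:ℕ)))⁻¹ * u * finRotate q ^ ((k:ℕ)))
              * ((finRotate q ^ ((k:ℕ)))⁻¹ * v * finRotate q ^ ((k:ℕ))) := by group
        rw [key]
        exact mul_mem hu' hv'
    | inv u hu hu' =>
        have key : (finRotate q ^ ((k:ℕ)))⁻¹ * u⁻¹ * finRotate q ^ ((k:ℕ))
            = ((finRotate q ^ ((k:ℕ)))⁻¹ * u * finRotate q ^ ((k:ℕ)))⁻¹ := by group
        rw [key]
        exact inv_mem hu'
  have range_eq : ωx.range = Ngrp m q τs := le_antisymm range_le Ngrp_le_range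
  refine ⟨range_eq, ?_⟩
  -- claim 2, ⊆ :
  have Im_le : Subgroup.map ωx ((⁅Hgrp s m q α τs E, Hgrp s m q α τs E⁆).subgroupOf K)
      ≤ ⁅Wgrp m q τs, Wgrp m q τs⁆ := by
    rintro π ⟨g, hg, rfl⟩
    replace hg := Subgroup.mem_subgroupOf.mp hg
    obtain ⟨c, hcbot, ρ, hρ, hL⟩ := commHL hg
    rw [AddSubgroup.mem_bot] at hcbot
    rw [hcbot] at hL
    rw [omega_det g ρ hL]
    exact hρ X
  -- the auxiliary subgroup `D`
  set Dset : Set (Equiv.Perm (Fin q)) :=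
    {u | ∃ (j : Fin m) (z : ℤ), u = (finRotate q : Equiv.Perm (Fin q)) ^ (-z) * τs j
        * (finRotate q : Equiv.Perm (Fin q)) ^ z * (τs j)⁻¹}
    ∪ {d | ∃ n ∈ Ngrp m q τs, ∃ n' ∈ Ngrp m q τs, d = ⁅n, n'⁆} with hDset
  set Dg : Subgroup (Equiv.Perm (Fin q)) := Subgroup.closure Dset with hDg
  have hUmem : ∀ (j : Fin m) (z : ℤ),
      (finRotate q : Equiv.Perm (Fin q)) ^ (-z) * τs j
        * (finRotate q : Equiv.Perm (Fin q)) ^ z * (τs j)⁻¹ ∈ Dg :=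
    fun j z => Subgroup.subset_closure (Or.inl ⟨j, z, rfl⟩)
  have hCommMem : ∀ n ∈ Ngrp m q τs, ∀ n' ∈ Ngrp m q τs, ⁅n, n'⁆ ∈ Dg :=
    fun n hn n' hn' => Subgroup.subset_closure (Or.inr ⟨n, hn, n', hn', rfl⟩)
  have hU_Ngrp : ∀ (j : Fin m) (z : ℤ),
      (finRotate q : Equiv.Perm (Fin q)) ^ (-z) * τs j
        * (finRotate q : Equiv.Perm (Fin q)) ^ z * (τs j)⁻¹ ∈ Ngrp m q τs := by
    intro j z
    have h := zconj_mem_Ngrp (τs := τs) (tau_mem_SQgrp (τs := τs) j) (-z)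
    rw [show ((finRotate q : Equiv.Perm (Fin q)) ^ (-z))⁻¹
        = (finRotate q : Equiv.Perm (Fin q)) ^ z by rw [← zpow_neg, neg_neg]] at h
    exact mul_mem h (inv_mem (SQ_le_Ngrp (τs := τs) (tau_mem_SQgrp (τs := τs) j)))
  -- `D ≤ Im`
  have D_le_Im : Dg ≤ Subgroup.map ωx ((⁅Hgrp s m q α τs E, Hgrp s m q α τs E⁆).subgroupOf K) := by
    rw [hDg, Subgroup.closure_le]
    rintro u (⟨j, z, rfl⟩ | ⟨n, hn, n', hn', rfl⟩)
    · have hlt : (z % (q:ℤ)).toNat < q := by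
        have h1 : z % (q:ℤ) < (q:ℤ) := Int.emod_lt_of_pos z (by exact_mod_cast hq0)
        omega
      obtain ⟨F, a, haA, hFdef, hωF⟩ := constructF ⟨(z % (q:ℤ)).toNat, hlt⟩ j
      have hCmemHH : ((F * (⟨E (τs j), hEK j⟩ : ↥K)⁻¹ : ↥K) : Equiv.Perm Circ)
          ∈ ⁅Hgrp s m q α τs E, Hgrp s m q α τs E⁆ := by
        have hCdef : ((F * (⟨E (τs j), hEK j⟩ : ↥K)⁻¹ : ↥K) : Equiv.Perm Circ)
            = ⁅Rot a, E (τs j)⁆ := by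
          push_cast
          rw [hFdef, commutatorElement_def]
        rw [hCdef]
        exact Subgroup.commutator_mem_commutator (Rot_mem_Hgrp haA)
          (Subgroup.subset_closure (Or.inr ⟨j, rfl⟩))
      refine Subgroup.mem_map.mpr ⟨F * (⟨E (τs j), hEK j⟩ : ↥K)⁻¹,
        Subgroup.mem_subgroupOf.mpr hCmemHH, ?_⟩
      rw [map_mul, map_inv, hωF, hωE j, zpow_neg, sigma_zpow_natmod z]
    · rw [← range_eq] at hn hn'
      obtain ⟨f, rfl⟩ := hn
      obtain ⟨g, rfl⟩ := hn'
      refine Subgroup.mem_map.mpr ⟨f * g * f⁻¹ * g⁻¹, ?_, ?_⟩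
      · rw [Subgroup.mem_subgroupOf]
        have hcoe : ((f * g * f⁻¹ * g⁻¹ : ↥K) : Equiv.Perm Circ)
            = ⁅(f : Equiv.Perm Circ), (g : Equiv.Perm Circ)⁆ := by
          push_cast
          rw [commutatorElement_def]
        rw [hcoe]
        exact Subgroup.commutator_mem_commutator (hKle f.2).1 (hKle g.2).1
      · rw [commutatorElement_def]
        simp only [map_mul, map_inv]
  -- conjugation stability of `D` by `Ngrp`
  have hDg_N : ∀ nn ∈ Ngrp m q τs, ∀ d ∈ Dg, nn * d * nn⁻¹ ∈ Dg := by
    intro nn hnn d hd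
    induction hd using Subgroup.closure_induction with
    | mem u hu =>
        rcases hu with ⟨j, z, rfl⟩ | ⟨n, hn, n', hn', rfl⟩
        · have key : nn * ((finRotate q : Equiv.Perm (Fin q)) ^ (-z) * τs j
              * (finRotate q : Equiv.Perm (Fin q)) ^ z * (τs j)⁻¹) * nn⁻¹
              = ⁅nn, (finRotate q : Equiv.Perm (Fin q)) ^ (-z) * τs j
              * (finRotate q : Equiv.Perm (Fin q)) ^ z * (τs j)⁻¹⁆
              * ((finRotate q : Equiv.Perm (Fin q)) ^ (-z) * τs j
              * (finRotate q : Equiv.Perm (Fin q)) ^ z * (τs j)⁻¹) := by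
            rw [commutatorElement_def]
            group
          rw [key]
          exact mul_mem (hCommMem nn hnn _ (hU_Ngrp j z)) (hUmem j z)
        · have key : nn * ⁅n, n'⁆ * nn⁻¹ = ⁅nn * n * nn⁻¹, nn * n' * nn⁻¹⁆ := by
            rw [commutatorElement_def, commutatorElement_def]
            group
          rw [key]
          exact hCommMem _ (mul_mem (mul_mem hnn hn) (inv_mem hnn))
            _ (mul_mem (mul_mem hnn hn') (inv_mem hnn))
    | one => simpa using one_mem Dg
    | mul a b ha hb ha' hb' =>
        have key : nn * (a * b) * nn⁻¹ = (nn * a * nn⁻¹) * (nn * b * nn⁻¹) := by group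
        rw [key]
        exact mul_mem ha' hb'
    | inv a ha ha' =>
        have key : nn * a⁻¹ * nn⁻¹ = (nn * a * nn⁻¹)⁻¹ := by group
        rw [key]
        exact inv_mem ha'
  -- conjugation stability of `D` by `σ` (both directions)
  have hDg_sigma : ∀ (ε : ℤ), ∀ d ∈ Dg,
      (finRotate q : Equiv.Perm (Fin q)) ^ ε * d
        * ((finRotate q : Equiv.Perm (Fin q)) ^ ε)⁻¹ ∈ Dg := by
    intro ε d hd
    induction hd using Subgroup.closure_induction with
    | mem u hu =>
        rcases hu with ⟨j, z, rfl⟩ | ⟨n, hn, n', hn', rfl⟩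
        · have key : (finRotate q : Equiv.Perm (Fin q)) ^ ε
              * ((finRotate q : Equiv.Perm (Fin q)) ^ (-z) * τs j
                * (finRotate q : Equiv.Perm (Fin q)) ^ z * (τs j)⁻¹)
              * ((finRotate q : Equiv.Perm (Fin q)) ^ ε)⁻¹
              = ((finRotate q : Equiv.Perm (Fin q)) ^ (-(z - ε)) * τs j
                * (finRotate q : Equiv.Perm (Fin q)) ^ (z - ε) * (τs j)⁻¹)
              * ((finRotate q : Equiv.Perm (Fin q)) ^ (-(-ε)) * τs j
                * (finRotate q : Equiv.Perm (Fin q)) ^ (-ε) * (τs j)⁻¹)⁻¹ := by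
            group
          rw [key]
          exact mul_mem (hUmem j (z - ε)) (inv_mem (hUmem j (-ε)))
        · have key : (finRotate q : Equiv.Perm (Fin q)) ^ ε * ⁅n, n'⁆
              * ((finRotate q : Equiv.Perm (Fin q)) ^ ε)⁻¹
              = ⁅(finRotate q : Equiv.Perm (Fin q)) ^ ε * n
                  * ((finRotate q : Equiv.Perm (Fin q)) ^ ε)⁻¹,
                 (finRotate q : Equiv.Perm (Fin q)) ^ ε * n'
                  * ((finRotate q : Equiv.Perm (Fin q)) ^ ε)⁻¹⁆ := by
            rw [commutatorElement_def, commutatorElement_def]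
            group
          rw [key]
          exact hCommMem _ (Ngrp_zconj ε hn) _ (Ngrp_zconj ε hn')
    | one => simpa using one_mem Dg
    | mul a b ha hb ha' hb' =>
        have key : (finRotate q : Equiv.Perm (Fin q)) ^ ε * (a * b)
              * ((finRotate q : Equiv.Perm (Fin q)) ^ ε)⁻¹
            = ((finRotate q : Equiv.Perm (Fin q)) ^ ε * a
                * ((finRotate q : Equiv.Perm (Fin q)) ^ ε)⁻¹)
              * ((finRotate q : Equiv.Perm (Fin q)) ^ ε * b
                * ((finRotate q : Equiv.Perm (Fin q)) ^ ε)⁻¹) := by group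
        rw [key]
        exact mul_mem ha' hb'
    | inv a ha ha' =>
        have key : (finRotate q : Equiv.Perm (Fin q)) ^ ε * a⁻¹
              * ((finRotate q : Equiv.Perm (Fin q)) ^ ε)⁻¹
            = ((finRotate q : Equiv.Perm (Fin q)) ^ ε * a
                * ((finRotate q : Equiv.Perm (Fin q)) ^ ε)⁻¹)⁻¹ := by group
        rw [key]
        exact inv_mem ha'
  -- `W` normalizes `D`
  have hW_norm : ∀ w ∈ Wgrp m q τs, ∀ d ∈ Dg, w * d * w⁻¹ ∈ Dg := by
    have hle : Wgrp m q τs ≤ Subgroup.normalizer (Dg : Set (Equiv.Perm (Fin q))) := by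
      rw [Wgrp, Subgroup.closure_le]
      rintro g (hg | ⟨j, rfl⟩)
      · rw [Set.mem_singleton_iff] at hg
        subst hg
        rw [SetLike.mem_coe, Subgroup.mem_normalizer_iff]
        intro h
        constructor
        · intro hh
          have := hDg_sigma 1 h hh
          rwa [zpow_one] at this
        · intro hh
          have := hDg_sigma (-1) _ hh
          rw [zpow_neg, zpow_one] at this
          have key : (finRotate q : Equiv.Perm (Fin q))⁻¹
              * (finRotate q * h * (finRotate q)⁻¹) * (finRotate q)⁻¹⁻¹ = h := by group
          rwa [key] at this
      · rw [SetLike.mem_coe, Subgroup.mem_normalizer_iff]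
        intro h
        constructor
        · intro hh
          exact hDg_N (τs j) (SQ_le_Ngrp (τs := τs) (tau_mem_SQgrp (τs := τs) j)) h hh
        · intro hh
          have := hDg_N (τs j)⁻¹ (inv_mem (SQ_le_Ngrp (τs := τs) (tau_mem_SQgrp (τs := τs) j))) _ hh
          have key : (τs j)⁻¹ * (τs j * h * (τs j)⁻¹) * (τs j)⁻¹⁻¹ = h := by group
          rwa [key] at this
    intro w hw d hd
    exact (Subgroup.mem_normalizer_iff.mp (hle hw) d).mp hd
  -- base commutators lie in `D`
  have hbase : ∀ g ∈ ({finRotate q} ∪ Set.range τs : Set (Equiv.Perm (Fin q))),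
      ∀ h ∈ ({finRotate q} ∪ Set.range τs : Set (Equiv.Perm (Fin q))), ⁅g, h⁆ ∈ Dg := by
    rintro g (hg | ⟨i, rfl⟩) h (hh | ⟨j, rfl⟩)
    · rw [Set.mem_singleton_iff] at hg hh
      subst hg; subst hh
      have key : ⁅(finRotate q : Equiv.Perm (Fin q)), finRotate q⁆ = 1 := by
        rw [commutatorElement_def]; group
      rw [key]
      exact one_mem Dg
    · rw [Set.mem_singleton_iff] at hg
      subst hg
      have key : ⁅(finRotate q : Equiv.Perm (Fin q)), τs j⁆
          = (finRotate q : Equiv.Perm (Fin q)) ^ (-(-1:ℤ)) * τs j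
            * (finRotate q : Equiv.Perm (Fin q)) ^ (-1:ℤ) * (τs j)⁻¹ := by
        rw [commutatorElement_def]; group
      rw [key]
      exact hUmem j (-1)
    · rw [Set.mem_singleton_iff] at hh
      subst hh
      have key : ⁅τs i, (finRotate q : Equiv.Perm (Fin q))⁆
          = ((finRotate q : Equiv.Perm (Fin q)) ^ (-(-1:ℤ)) * τs i
            * (finRotate q : Equiv.Perm (Fin q)) ^ (-1:ℤ) * (τs i)⁻¹)⁻¹ := by
        rw [commutatorElement_def]; group
      rw [key]
      exact inv_mem (hUmem i (-1))
    · exact hCommMem _ (SQ_le_Ngrp (τs := τs) (tau_mem_SQgrp (τs := τs) i)) _ (SQ_le_Ngrp (τs := τs) (tau_mem_SQgrp (τs := τs) j))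
  have WW_le_D : ⁅Wgrp m q τs, Wgrp m q τs⁆ ≤ Dg := by
    rw [Wgrp]
    refine commutator_closure_le _ Dg ?_ hbase
    intro w hw d hd
    exact hW_norm w hw d hd
  exact le_antisymm Im_le (le_trans WW_le_D D_le_Im)
end
end

section
/- The commutator subgroup [H,H] is a normal subgroup of K, and the abelianization H/[H,H] of H is isomorphic to the direct product (K/[H,H]) × A; in particular it is isomorphic to (K/[H,H]) × ℤ^s. -/
open Equiv

noncomputable section

namespace Stmt16Aux

/-- displacement classes mod `RatPts q` -/
abbrev CQ (q : ℕ) := Circ ⧸ RatPts q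

lemma mkq_sub_add (q : ℕ) (a b c : Circ) :
    ((a - c : Circ) : CQ q) = ((a - b : Circ) : CQ q) + ((b - c : Circ) : CQ q) := by
  rw [← QuotientAddGroup.mk_add, sub_add_sub_cancel]

/-- The subgroup of permutations with constant displacement mod `RatPts q`. -/
def Dgrp (q : ℕ) : Subgroup (Equiv.Perm Circ) where
  carrier := {f | ∀ x : Circ, ((f x - x : Circ) : CQ q) = ((f 0 - 0 : Circ) : CQ q)}
  one_mem' := by intro x; simp
  mul_mem' := by
    intro f g hf hg
    have key : ∀ x : Circ, (((f * g) x - x : Circ) : CQ q)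
        = ((f 0 - 0 : Circ) : CQ q) + ((g 0 - 0 : Circ) : CQ q) := by
      intro x
      rw [Equiv.Perm.mul_apply, mkq_sub_add q (f (g x)) (g x) x, hf (g x), hg x]
    intro x
    rw [key x, key 0]
  inv_mem' := by
    intro f hf
    have key : ∀ x : Circ, ((f⁻¹ x - x : Circ) : CQ q) = -((f 0 - 0 : Circ) : CQ q) := by
      intro x
      have h1 : f⁻¹ x - x = -(f (f⁻¹ x) - f⁻¹ x) := by
        rw [show f (f⁻¹ x) = x by simp, neg_sub]
      rw [h1, QuotientAddGroup.mk_neg, hf (f⁻¹ x)]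
    intro x
    rw [key x, key 0]

/-- The displacement homomorphism on `Dgrp q`. -/
def psi0 (q : ℕ) : Dgrp q →* Multiplicative (CQ q) :=
  MonoidHom.mk' (fun f => Multiplicative.ofAdd (((f.1 0 - 0 : Circ) : CQ q)))
    (by
      rintro ⟨f, hf⟩ ⟨g, hg⟩
      have : (((f * g) 0 - 0 : Circ) : CQ q)
          = ((f 0 - 0 : Circ) : CQ q) + ((g 0 - 0 : Circ) : CQ q) := by
        rw [Equiv.Perm.mul_apply, mkq_sub_add q (f (g 0)) (g 0) 0, hf (g 0)]
      show Multiplicative.ofAdd (((f * g) 0 - 0 : Circ) : CQ q)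
          = Multiplicative.ofAdd ((f 0 - 0 : Circ) : CQ q) *
            Multiplicative.ofAdd ((g 0 - 0 : Circ) : CQ q)
      rw [this, ofAdd_add])

lemma psi0_apply (q : ℕ) (f : Dgrp q) :
    psi0 q f = Multiplicative.ofAdd (((f.1 0 - 0 : Circ) : CQ q)) := rfl

lemma psi0_eq_one_iff (q : ℕ) (f : Dgrp q) : psi0 q f = 1 ↔ (f : Equiv.Perm Circ) ∈ Delta q := by
  rw [psi0_apply]
  constructor
  · intro h x
    have h0 : ((f.1 0 - 0 : Circ) : CQ q) = 0 := h
    have := f.2 x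
    rw [h0] at this
    exact (QuotientAddGroup.eq_zero_iff _).1 this
  · intro h
    have : ((f.1 0 - 0 : Circ) : CQ q) = 0 := (QuotientAddGroup.eq_zero_iff _).2 (h 0)
    rw [this]; rfl

lemma rot_apply (a x : Circ) : Rot a x = x + a := rfl

lemma rot_add (a b : Circ) : Rot (a + b) = Rot a * Rot b := by
  ext x
  simp only [rot_apply, Equiv.Perm.mul_apply, rot_apply]
  rw [add_comm a b, ← add_assoc]

lemma rot_zero : Rot (0 : Circ) = 1 := by
  ext x; simp [rot_apply]

lemma rot_neg (a : Circ) : Rot (-a) = (Rot a)⁻¹ := by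
  have : Rot a * Rot (-a) = 1 := by rw [← rot_add]; simp [rot_zero]
  exact eq_inv_of_mul_eq_one_right (by rw [← rot_add]; simp [rot_zero])

lemma rot_mem_D (q : ℕ) (a : Circ) : Rot a ∈ Dgrp q := by
  intro x
  simp [rot_apply]

lemma circ_decomp (q : ℕ) (hq : 1 ≤ q) (x : Circ) :
    ∃ (i : Fin q) (t : ℝ), 0 ≤ t ∧ t < 1 / q ∧ x = ((((i : ℕ) : ℝ) / q + t : ℝ) : Circ) := by
  have hq0 : (0 : ℝ) < q := by exact_mod_cast Nat.pos_of_ne_zero (by omega)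
  obtain ⟨r, rfl⟩ : ∃ r : ℝ, (r : Circ) = x := Quotient.exists_rep x
  set y : ℝ := Int.fract r with hy
  have hy0 : 0 ≤ y := Int.fract_nonneg r
  have hy1 : y < 1 := Int.fract_lt_one r
  have hxy : (y : Circ) = (r : Circ) := by
    have : r - y = (⌊r⌋ : ℝ) := by rw [hy, Int.self_sub_fract]
    have hmem : r - y ∈ AddSubgroup.zmultiples (1 : ℝ) := by
      rw [this]
      exact ⟨⌊r⌋, by simp⟩
    symm
    exact (QuotientAddGroup.eq_iff_sub_mem).2 (by simpa using hmem)
  set n : ℤ := ⌊y * q⌋ with hn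
  have hn0 : 0 ≤ n := Int.floor_nonneg.2 (by positivity)
  have hnq : n < q := Int.floor_lt.2 (by push_cast; nlinarith)
  refine ⟨⟨n.toNat, by omega⟩, y - (n : ℝ) / q, ?_, ?_, ?_⟩
  · have h1 : (n : ℝ) ≤ y * q := Int.floor_le _
    have : (n : ℝ) / q ≤ y := by rw [div_le_iff₀ hq0]; linarith
    linarith
  · have h2 : y * q < n + 1 := Int.lt_floor_add_one _
    have : y < ((n : ℝ) + 1) / q := by rw [lt_div_iff₀ hq0]; linarith
    have := sub_lt_sub_right this ((n : ℝ) / q)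
    calc y - (n : ℝ) / q < ((n : ℝ) + 1) / q - (n : ℝ) / q := this
      _ = 1 / q := by ring
  · rw [← hxy]
    congr 1
    have : ((n.toNat : ℕ) : ℝ) = (n : ℝ) := by
      exact_mod_cast Int.toNat_of_nonneg hn0
    rw [this]
    ring

lemma coe_div_mem_ratpts (q : ℕ) (k : ℤ) : (((k : ℝ) / q : ℝ) : Circ) ∈ RatPts q := by
  refine ⟨k, ?_⟩
  show (k • ((((q : ℝ)⁻¹ : ℝ)) : Circ)) = _
  rw [← QuotientAddGroup.mk_zsmul]
  congr 1
  rw [zsmul_eq_mul]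
  ring

lemma Delta_le_Dgrp (q : ℕ) : Delta q ≤ Dgrp q := by
  intro f hf x
  rw [(QuotientAddGroup.eq_zero_iff _).2 (hf x), (QuotientAddGroup.eq_zero_iff _).2 (hf 0)]

lemma E_mem_Delta {q : ℕ} (hq : 1 ≤ q) {E : Equiv.Perm (Fin q) → Equiv.Perm Circ}
    (hE : ∀ (τ : Equiv.Perm (Fin q)) (i : Fin q) (t : ℝ), 0 ≤ t → t < 1 / q →
      E τ ((((i : ℕ) : ℝ) / q + t : ℝ) : Circ) = ((((τ i : ℕ) : ℝ) / q + t : ℝ) : Circ))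
    (τ : Equiv.Perm (Fin q)) : E τ ∈ Delta q := by
  intro x
  obtain ⟨i, t, ht0, ht1, rfl⟩ := circ_decomp q hq x
  rw [hE τ i t ht0 ht1]
  have key : (((((τ i : ℕ) : ℝ) / q + t : ℝ) : Circ)) - ((((i : ℕ) : ℝ) / q + t : ℝ) : Circ)
      = ((((((τ i : ℕ) : ℤ) - ((i : ℕ) : ℤ) : ℤ) : ℝ) / q : ℝ) : Circ) := by
    rw [← QuotientAddGroup.mk_sub]
    congr 1
    push_cast
    ring
  rw [key]
  exact coe_div_mem_ratpts q _

/-- The coordinate homomorphism `(Fin s → ℤ) →+ Circ`. -/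
def gmap (s : ℕ) (α : Fin s → ℝ) : (Fin s → ℤ) →+ Circ where
  toFun n := ((∑ i, (n i : ℝ) * α i : ℝ) : Circ)
  map_zero' := by norm_num
  map_add' n m := by
    have key : (∑ i, ((n + m) i : ℝ) * α i) = (∑ i, (n i : ℝ) * α i) + (∑ i, (m i : ℝ) * α i) := by
      rw [← Finset.sum_add_distrib]
      refine Finset.sum_congr rfl fun i _ => ?_
      have : ((n + m) i : ℝ) = (n i : ℝ) + (m i : ℝ) := by rw [Pi.add_apply]; push_cast; ring
      rw [this]; ring
    show ((∑ i, ((n + m) i : ℝ) * α i : ℝ) : Circ) = _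
    rw [key, QuotientAddGroup.mk_add]

lemma indep_zero {s : ℕ} {α : Fin s → ℝ} (hα : LinearIndependent ℚ (Fin.cons (1 : ℝ) α))
    (n : Fin s → ℤ) (c : ℚ) (h : (∑ i, (n i : ℝ) * α i) = (c : ℝ)) : n = 0 := by
  set g : Fin (s + 1) → ℚ := Fin.cons (-c) (fun i => (n i : ℚ)) with hgdef
  set v : Fin (s + 1) → ℝ := Fin.cons (1 : ℝ) α with hvdef
  have hg := Fintype.linearIndependent_iff.1 hα g
  have hsum : ∑ j : Fin (s + 1), g j • v j = (0 : ℝ) := by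
    rw [hgdef, hvdef, Fin.sum_univ_succ]
    simp only [Fin.cons_zero, Fin.cons_succ, Rat.smul_def]
    push_cast
    rw [h]
    ring
  funext i
  have h2 := hg hsum i.succ
  rw [hgdef] at h2
  simp only [Fin.cons_succ] at h2
  exact_mod_cast h2

lemma gmap_injective {s : ℕ} {α : Fin s → ℝ}
    (hα : LinearIndependent ℚ (Fin.cons (1 : ℝ) α)) : Function.Injective (gmap s α) := by
  rw [injective_iff_map_eq_zero]
  intro n hn
  obtain ⟨k, hk⟩ := (AddCircle.coe_eq_zero_iff (1 : ℝ)).1 hn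
  refine indep_zero hα n k ?_
  rw [← hk, zsmul_eq_mul, mul_one]
  norm_cast

lemma gmap_range (s : ℕ) (α : Fin s → ℝ) : (gmap s α).range = Agrp s α := by
  apply le_antisymm
  · rintro x ⟨n, rfl⟩
    have : gmap s α n = ∑ i, n i • (((α i : ℝ)) : Circ) := by
      show ((∑ i, (n i : ℝ) * α i : ℝ) : Circ) = _
      rw [show ((∑ i, (n i : ℝ) * α i : ℝ) : Circ)
          = (QuotientAddGroup.mk' _) (∑ i, (n i : ℝ) * α i) from rfl, map_sum]
      exact Finset.sum_congr rfl fun i _ => by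
        rw [show (n i : ℝ) * α i = n i • α i by rw [zsmul_eq_mul], map_zsmul]
        rfl
    rw [this, Agrp]
    exact AddSubgroup.sum_mem _ fun i _ =>
      AddSubgroup.zsmul_mem _ (AddSubgroup.subset_closure (Set.mem_range_self i)) _
  · rw [Agrp]
    rw [AddSubgroup.closure_le]
    rintro x ⟨i, rfl⟩
    refine ⟨(Pi.single i 1 : Fin s → ℤ), ?_⟩
    have key : (∑ j, (((Pi.single i 1 : Fin s → ℤ) j : ℤ) : ℝ) * α j) = α i := by
      rw [Finset.sum_eq_single i]
      · simp
      · intro j _ hj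
        rw [Pi.single_eq_of_ne hj]
        simp
      · simp
    show ((∑ j, (((Pi.single i 1 : Fin s → ℤ) j : ℤ) : ℝ) * α j : ℝ) : Circ) = _
    rw [key]

/-- `A ≅ ℤ^s`. -/
def agrpEquiv {s : ℕ} {α : Fin s → ℝ}
    (hα : LinearIndependent ℚ (Fin.cons (1 : ℝ) α)) : (Fin s → ℤ) ≃+ ↥(Agrp s α) :=
  AddEquiv.ofBijective
    ((gmap s α).codRestrict (Agrp s α) fun n => gmap_range s α ▸ ⟨n, rfl⟩)
    ⟨fun a b hab => gmap_injective hα (Subtype.ext_iff.1 hab),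
     fun a => by
      obtain ⟨n, hn⟩ : (a : Circ) ∈ (gmap s α).range := (gmap_range s α).symm ▸ a.2
      exact ⟨n, Subtype.ext hn⟩⟩

lemma agrp_inter_ratpts {s : ℕ} {α : Fin s → ℝ}
    (hα : LinearIndependent ℚ (Fin.cons (1 : ℝ) α)) (q : ℕ) (a : Circ)
    (ha : a ∈ Agrp s α) (hr : a ∈ RatPts q) : a = 0 := by
  obtain ⟨n, rfl⟩ : a ∈ (gmap s α).range := (gmap_range s α).symm ▸ ha
  obtain ⟨k, hk⟩ := hr
  have hk' : (((k : ℝ) / q : ℝ) : Circ) = gmap s α n := by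
    rw [← hk]
    show _ = (k • ((((q : ℝ)⁻¹ : ℝ)) : Circ))
    rw [← QuotientAddGroup.mk_zsmul]
    congr 1
    rw [zsmul_eq_mul]
    ring
  have hsub : (∑ i, (n i : ℝ) * α i) - (k : ℝ) / q ∈ AddSubgroup.zmultiples (1 : ℝ) := by
    have := (QuotientAddGroup.eq_iff_sub_mem).1 hk'.symm
    simpa using this
  obtain ⟨l, hl⟩ := hsub
  have hc : (∑ i, (n i : ℝ) * α i) = (((k : ℚ) / q + l : ℚ) : ℝ) := by
    have hl' : (l : ℝ) = ∑ i, (n i : ℝ) * α i - (k : ℝ) / q := by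
      have h2 := hl
      simp only [zsmul_eq_mul, mul_one] at h2
      exact h2
    push_cast
    linarith
  have := indep_zero hα n _ hc
  rw [this]
  exact map_zero _

end Stmt16Aux


theorem stmt_16
    (s m q : ℕ) (hs : 1 ≤ s) (hm : 1 ≤ m) (hq : 2 ≤ q)
    (α : Fin s → ℝ) (hα : LinearIndependent ℚ (Fin.cons (1 : ℝ) α))
    (τs : Fin m → Equiv.Perm (Fin q))
    (E : Equiv.Perm (Fin q) → Equiv.Perm Circ)
    (hE : ∀ (τ : Equiv.Perm (Fin q)) (i : Fin q) (t : ℝ), 0 ≤ t → t < 1 / q →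
      E τ ((((i : ℕ) : ℝ) / q + t : ℝ) : Circ) = ((((τ i : ℕ) : ℝ) / q + t : ℝ) : Circ))
    (H K : Subgroup (Equiv.Perm Circ)) (hH : H = Hgrp s m q α τs E) (hK : K = H ⊓ Delta q)
    [inst : ((⁅H, H⁆).subgroupOf K).Normal] :
    ⁅H, H⁆ ≤ K ∧
    ((⁅H, H⁆).subgroupOf K).Normal ∧
    Nonempty (Abelianization ↥H ≃*
      ((↥K ⧸ (⁅H, H⁆).subgroupOf K) × Multiplicative ↥(Agrp s α))) ∧
    Nonempty (Abelianization ↥H ≃*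
      ((↥K ⧸ (⁅H, H⁆).subgroupOf K) × Multiplicative (Fin s → ℤ))) := by
  classical
  subst hH
  subst hK
  set Hg : Subgroup (Equiv.Perm Circ) := Hgrp s m q α τs E with hHgdef
  set Kg : Subgroup (Equiv.Perm Circ) := Hg ⊓ Delta q with hKgdef
  have hq1 : 1 ≤ q := by omega
  have hED : ∀ τ : Equiv.Perm (Fin q), E τ ∈ Delta q := fun τ => Stmt16Aux.E_mem_Delta hq1 hE τ
  have hHD : Hg ≤ Stmt16Aux.Dgrp q := by
    rw [hHgdef, Hgrp]
    rw [Subgroup.closure_le]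
    rintro f (⟨i, rfl⟩ | ⟨j, rfl⟩)
    · exact Stmt16Aux.rot_mem_D q _
    · exact Stmt16Aux.Delta_le_Dgrp q (hED (τs j))
  have hKH : Kg ≤ Hg := inf_le_left
  have hKDelta : Kg ≤ Delta q := inf_le_right
  set ψH : ↥Hg →* Multiplicative (Stmt16Aux.CQ q) :=
    (Stmt16Aux.psi0 q).comp (Subgroup.inclusion hHD) with hψHdef
  have hψH_one : ∀ f : ↥Hg, ψH f = 1 ↔ (f : Equiv.Perm Circ) ∈ Delta q := fun f =>
    Stmt16Aux.psi0_eq_one_iff q _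
  -- Part 1 : [H,H] ≤ K
  have part1 : ⁅Hg, Hg⁆ ≤ Kg := by
    rw [Subgroup.commutator_le]
    intro g₁ h₁ g₂ h₂
    refine ⟨?_, ?_⟩
    · rw [commutatorElement_def]
      exact Subgroup.mul_mem _ (Subgroup.mul_mem _ (Subgroup.mul_mem _ h₁ h₂)
        (Subgroup.inv_mem _ h₁)) (Subgroup.inv_mem _ h₂)
    · open scoped commutatorElement in
      have hone : ψH ⁅(⟨g₁, h₁⟩ : ↥Hg), (⟨g₂, h₂⟩ : ↥Hg)⁆ = 1 := by
        rw [map_commutatorElement]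
        exact commutatorElement_eq_one_iff_mul_comm.2 (mul_comm _ _)
      exact (hψH_one _).1 hone
  -- commutator subgroup correspondence
  have hcomm : ∀ y : ↥Hg, (y : Equiv.Perm Circ) ∈ ⁅Hg, Hg⁆ ↔ y ∈ commutator ↥Hg := by
    intro y
    have hmap : Subgroup.map Hg.subtype (commutator ↥Hg) = ⁅Hg, Hg⁆ := by
      rw [commutator_def, Subgroup.map_commutator, ← MonoidHom.range_eq_map,
        Subgroup.range_subtype]
    constructor
    · intro hy
      rw [← hmap] at hy
      obtain ⟨z, hz, hzy⟩ := hy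
      have hzz : z = y := Subtype.ext hzy
      rwa [hzz] at hz
    · intro hy
      rw [← hmap]
      exact ⟨y, hy, rfl⟩
  -- the map θ1 : K/[H,H] → Abelianization H
  have hνker : ∀ x ∈ (⁅Hg, Hg⁆).subgroupOf Kg,
      (Abelianization.of.comp (Subgroup.inclusion hKH)) x = 1 := by
    intro x hx
    rw [Subgroup.mem_subgroupOf] at hx
    show Abelianization.of (Subgroup.inclusion hKH x) = 1
    exact (QuotientGroup.eq_one_iff _).2 ((hcomm _).1 hx)
  set θ1 : (↥Kg ⧸ (⁅Hg, Hg⁆).subgroupOf Kg) →* Abelianization ↥Hg :=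
    QuotientGroup.lift _ (Abelianization.of.comp (Subgroup.inclusion hKH)) hνker with hθ1def
  -- rotations by elements of A are in H
  have hRotH : ∀ a : Circ, a ∈ Agrp s α → Rot a ∈ Hg := by
    intro a ha
    refine AddSubgroup.closure_induction ?_ ?_ ?_ ?_ ha
    · rintro x ⟨i, rfl⟩
      exact Subgroup.subset_closure (Or.inl ⟨i, rfl⟩)
    · rw [Stmt16Aux.rot_zero]
      exact one_mem Hg
    · intro x y _ _ hx' hy'
      rw [Stmt16Aux.rot_add]
      exact mul_mem hx' hy'
    · intro x _ hx'
      rw [Stmt16Aux.rot_neg]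
      exact inv_mem hx'
  -- the section χ : Multiplicative A → Abelianization H
  set c0 : ↥(Agrp s α) → ↥Hg := fun a => ⟨Rot (a : Circ), hRotH _ a.2⟩ with hc0def
  have hc0 : ∀ a b : ↥(Agrp s α), c0 (a + b) = c0 a * c0 b := by
    intro a b
    apply Subtype.ext
    show Rot (((a + b : ↥(Agrp s α))) : Circ) = Rot (a : Circ) * Rot (b : Circ)
    rw [AddSubgroup.coe_add, Stmt16Aux.rot_add]
  set χ : Multiplicative ↥(Agrp s α) →* Abelianization ↥Hg :=
    MonoidHom.mk' (fun a => Abelianization.of (c0 (Multiplicative.toAdd a)))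
      (by
        intro a b
        show Abelianization.of (c0 (Multiplicative.toAdd (a * b)))
            = Abelianization.of (c0 (Multiplicative.toAdd a)) *
              Abelianization.of (c0 (Multiplicative.toAdd b))
        rw [show Multiplicative.toAdd (a * b)
            = Multiplicative.toAdd a + Multiplicative.toAdd b from rfl, hc0, map_mul]) with hχdef
  set θ := θ1.coprod χ with hθdef
  set ψb : Abelianization ↥Hg →* Multiplicative (Stmt16Aux.CQ q) :=
    Abelianization.lift ψH with hψbdef
  have hψθ1 : ∀ u, ψb (θ1 u) = 1 := by
    intro u
    refine QuotientGroup.induction_on u ?_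
    intro k
    have h1 : θ1 (QuotientGroup.mk k) = Abelianization.of (Subgroup.inclusion hKH k) := rfl
    rw [h1, hψbdef, Abelianization.lift_apply_of]
    exact (hψH_one _).2 (hKDelta k.2)
  have hψχ : ∀ a, ψb (χ a) =
      Multiplicative.ofAdd ((((Multiplicative.toAdd a : ↥(Agrp s α)) : Circ) : Stmt16Aux.CQ q)) := by
    intro a
    show ψb (Abelianization.of (c0 (Multiplicative.toAdd a))) = _
    rw [hψbdef, Abelianization.lift_apply_of]
    show Multiplicative.ofAdd
      (((Rot ((Multiplicative.toAdd a : ↥(Agrp s α)) : Circ) 0 - 0 : Circ) : Stmt16Aux.CQ q)) = _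
    congr 2
    rw [Stmt16Aux.rot_apply]
    abel
  -- injectivity
  have hinj : Function.Injective θ := by
    rw [injective_iff_map_eq_one]
    rintro ⟨u, a⟩ h
    rw [hθdef, MonoidHom.coprod_apply] at h
    have hsplit : θ1 u * χ a = 1 := h
    have h2 : ψb (θ1 u) * ψb (χ a) = 1 := by rw [← map_mul, hsplit, map_one]
    rw [hψθ1 u, one_mul, hψχ a] at h2
    have h3 : ((((Multiplicative.toAdd a : ↥(Agrp s α)) : Circ)) : Stmt16Aux.CQ q) = 0 := h2
    have h4 : ((Multiplicative.toAdd a : ↥(Agrp s α)) : Circ) ∈ RatPts q :=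
      (QuotientAddGroup.eq_zero_iff _).1 h3
    have h5 : ((Multiplicative.toAdd a : ↥(Agrp s α)) : Circ) = 0 :=
      Stmt16Aux.agrp_inter_ratpts hα q _ (Multiplicative.toAdd a).2 h4
    have ha1 : a = 1 := by
      have : (Multiplicative.toAdd a : ↥(Agrp s α)) = 0 := Subtype.ext h5
      calc a = Multiplicative.ofAdd (Multiplicative.toAdd a) := rfl
        _ = Multiplicative.ofAdd (0 : ↥(Agrp s α)) := by rw [this]
        _ = 1 := rfl
    rw [ha1, map_one, mul_one] at hsplit
    have hu1 : u = 1 := by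
      obtain ⟨k, rfl⟩ := QuotientGroup.mk_surjective u
      have h6 : Abelianization.of (Subgroup.inclusion hKH k) = 1 := hsplit
      have h7 : (k : Equiv.Perm Circ) ∈ ⁅Hg, Hg⁆ :=
        (hcomm _).2 ((QuotientGroup.eq_one_iff _).1 h6)
      exact (QuotientGroup.eq_one_iff k).2 (Subgroup.mem_subgroupOf.2 h7)
    rw [ha1, hu1]
    rfl
  -- surjectivity
  have hofrange : ∀ (f : Equiv.Perm Circ) (hf : f ∈ Hg),
      Abelianization.of (⟨f, hf⟩ : ↥Hg) ∈ θ.range := by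
    intro f hf
    refine Subgroup.closure_induction
      (p := fun g hg => Abelianization.of (⟨g, hg⟩ : ↥Hg) ∈ θ.range) ?_ ?_ ?_ ?_ hf
    · rintro x (⟨i, rfl⟩ | ⟨j, rfl⟩)
      · refine ⟨(1, Multiplicative.ofAdd
          ⟨((α i : ℝ) : Circ), AddSubgroup.subset_closure (Set.mem_range_self i)⟩), ?_⟩
        rw [hθdef, MonoidHom.coprod_apply, map_one, one_mul]
        rfl
      · refine ⟨(QuotientGroup.mk
          (⟨E (τs j), ⟨Subgroup.subset_closure (Or.inr ⟨j, rfl⟩), hED (τs j)⟩⟩ : ↥Kg), 1), ?_⟩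
        rw [hθdef, MonoidHom.coprod_apply, map_one, mul_one]
        rfl
    · show Abelianization.of (⟨1, one_mem Hg⟩ : ↥Hg) ∈ θ.range
      have h1 : (⟨1, one_mem Hg⟩ : ↥Hg) = 1 := rfl
      rw [h1, map_one]
      exact one_mem _
    · intro x y hx hy hx' hy'
      show Abelianization.of (⟨x * y, mul_mem hx hy⟩ : ↥Hg) ∈ θ.range
      have h1 : (⟨x * y, mul_mem hx hy⟩ : ↥Hg) = ⟨x, hx⟩ * ⟨y, hy⟩ := rfl
      rw [h1, map_mul]
      exact mul_mem hx' hy'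
    · intro x hx hx'
      show Abelianization.of (⟨x⁻¹, inv_mem hx⟩ : ↥Hg) ∈ θ.range
      have h1 : (⟨x⁻¹, inv_mem hx⟩ : ↥Hg) = (⟨x, hx⟩ : ↥Hg)⁻¹ := rfl
      rw [h1, map_inv]
      exact inv_mem hx'
  have hsurj : Function.Surjective θ := by
    intro x
    refine QuotientGroup.induction_on x ?_
    rintro ⟨f, hf⟩
    exact hofrange f hf
  set e : Abelianization ↥Hg ≃*
      ((↥Kg ⧸ (⁅Hg, Hg⁆).subgroupOf Kg) × Multiplicative ↥(Agrp s α)) :=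
    (MulEquiv.ofBijective θ ⟨hinj, hsurj⟩).symm with hedef
  refine ⟨part1, inst, ⟨e⟩, ⟨e.trans (MulEquiv.prodCongr (MulEquiv.refl _)
    (AddEquiv.toMultiplicative (Stmt16Aux.agrpEquiv hα).symm))⟩⟩
end
end
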